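/- arXiv:1810.07794 — 2 statements merged into one kernel-verified Lean document; each statement's English description precedes it below -/
import Mathlib

section
/- Let H be a graph with at least one nontrivial component, of order k with independence number α(H), let i ∈ {α(H)+1, …, k}, and let n be sufficiently large. Then the sequence π̃_i(H,n) is not potentially H-graphic. Consequently, σ(H,n) ≥ max_{α(H)+1 ≤ i ≤ k} σ(π̃_i(H,n)) + 2. -/
open SimpleGraph

/-- The degree of a vertex, defined without decidability assumptions. -/
noncomputable def gdeg {V : Type*} [Fintype V] (G : SimpleGraph V) (v : V) : ℕ :=
  {w | G.Adj v w}.ncard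

/-- The multiset of vertex degrees of a finite simple graph. -/
noncomputable def degMultiset {V : Type*} [Fintype V] (G : SimpleGraph V) : Multiset ℕ :=
  Finset.univ.val.map (gdeg G)

/-- A finite sequence of naturals is *graphic* if it is the degree sequence of
a finite simple graph (a *realization*). -/
def IsGraphic (π : List ℕ) : Prop :=
  ∃ G : SimpleGraph (Fin π.length), degMultiset G = (π : Multiset ℕ)

/-- `H` is contained in `G` as a (not necessarily induced) subgraph. -/
def ContainsSub {V : Type*} {W : Type*} (H : SimpleGraph V) (G : SimpleGraph W) : Prop :=
  ∃ f : V → W, Function.Injective f ∧ ∀ ⦃a b⦄, H.Adj a b → G.Adj (f a) (f b)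

/-- `π` is *potentially `H`-graphic*: some realization of `π` contains `H` as a subgraph. -/
def PotentiallyGraphic {V : Type*} (H : SimpleGraph V) (π : List ℕ) : Prop :=
  ∃ G : SimpleGraph (Fin π.length), degMultiset G = (π : Multiset ℕ) ∧ ContainsSub H G

/-- The potential number `σ(H,n)`: the minimum even integer such that every
(nonincreasing) graphic sequence of length `n` with sum at least that integer is
potentially `H`-graphic. -/
noncomputable def potentialNumber {V : Type*} (H : SimpleGraph V) (n : ℕ) : ℕ :=
  sInf {s : ℕ | Even s ∧ ∀ π : List ℕ, π.length = n → π.Pairwise (· ≥ ·) →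
      IsGraphic π → s ≤ π.sum → PotentiallyGraphic H π}

/-- The maximum degree `Δ(G)` of a finite graph. -/
noncomputable def maxDeg {V : Type*} [Fintype V] (G : SimpleGraph V) : ℕ :=
  Finset.univ.sup (gdeg G)

/-- The independence number `α(G)`. -/
noncomputable def indepNum {V : Type*} [Fintype V] (G : SimpleGraph V) : ℕ :=
  sSup {k | ∃ s : Finset V, s.card = k ∧ (s : Set V).Pairwise fun a b => ¬ G.Adj a b}

/-- `∇_i(H)`: the minimum of `Δ(F)` over induced subgraphs `F` of `H` of order `i`. -/
noncomputable def nabla {V : Type*} [Fintype V] (H : SimpleGraph V) (i : ℕ) : ℕ :=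
  sInf {d | ∃ s : Finset V, s.card = i ∧ maxDeg (SimpleGraph.induce (s : Set V) H) = d}

/-- The sequence `π̃_i(H,n) = ((n-1)^{k-i}, (k-i+∇_i(H)-1)^{n-k+i})`, with the last
term reduced by one if the sum would otherwise be odd. -/
noncomputable def tildePi {V : Type*} [Fintype V] (H : SimpleGraph V) (i n : ℕ) : List ℕ :=
  let k := Fintype.card V
  let d := k - i + nabla H i - 1
  let base := List.replicate (k - i) (n - 1) ++ List.replicate (n - k + i) d
  if Even base.sum then base else base.dropLast ++ [d - 1]

/-- `σ̃_i(H) = 2(k-i) + ∇_i(H) - 1`. -/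
noncomputable def sigmaTildeI {V : Type*} [Fintype V] (H : SimpleGraph V) (i : ℕ) : ℕ :=
  2 * (Fintype.card V - i) + nabla H i - 1

/-- `σ̃(H) = max_{α(H)+1 ≤ i ≤ k} σ̃_i(H)`. -/
noncomputable def sigmaTilde {V : Type*} [Fintype V] (H : SimpleGraph V) : ℕ :=
  (Finset.Icc (_root_.indepNum H + 1) (Fintype.card V)).sup (sigmaTildeI H)

/-- The family `P(H,n)` of extremal nonrealizing sequences. -/
noncomputable def potSet {V : Type*} [Fintype V] (H : SimpleGraph V) (n : ℕ) : Set (List ℕ) :=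
  {π | ∃ i ∈ Finset.Icc (_root_.indepNum H + 1) (Fintype.card V),
      sigmaTildeI H i = sigmaTilde H ∧ π = tildePi H i n}

/-- `i*(H)`: the least index `i ∈ {α(H)+1, …, k}` with `σ̃_i(H) = σ̃(H)`. -/
noncomputable def iStar {V : Type*} [Fintype V] (H : SimpleGraph V) : ℕ :=
  sInf {i | i ∈ Finset.Icc (_root_.indepNum H + 1) (Fintype.card V) ∧ sigmaTildeI H i = sigmaTilde H}

/-- `‖π₁ - π₂‖ = Σ_j |x_j - y_j|`, padding the shorter sequence with zeros. -/
def seqDist (π₁ π₂ : List ℕ) : ℕ :=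
  ((List.range (max π₁.length π₂.length)).map fun j =>
    Nat.dist (π₁.getD j 0) (π₂.getD j 0)).sum

/-- `H` is stable with respect to the potential number (σ-stable). -/
def SigmaStable {V : Type*} [Fintype V] (H : SimpleGraph V) : Prop :=
  ∀ ε : ℝ, 0 < ε → ∃ δ : ℝ, 0 < δ ∧ ∃ n₀ : ℕ, ∀ n : ℕ, n₀ ≤ n →
    ∀ π : List ℕ, π.length = n → π.Pairwise (· ≥ ·) → IsGraphic π →
      ¬ PotentiallyGraphic H π →
      (potentialNumber H n : ℝ) - δ * n ≤ (π.sum : ℝ) →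
      ∃ π' ∈ potSet H n, (seqDist π π' : ℝ) < ε * n

/-- The nonincreasing degree sequence of a finite graph. -/
noncomputable def degList {V : Type*} [Fintype V] (G : SimpleGraph V) : List ℕ :=
  ((degMultiset G).sort (· ≤ ·)).reverse

/-- `π` is degree-sufficient for `H`: termwise, `π` dominates the nonincreasing
degree sequence of `H`. -/
def DegreeSufficient {V : Type*} [Fintype V] (H : SimpleGraph V) (π : List ℕ) : Prop :=
  Fintype.card V ≤ π.length ∧ ∀ i < Fintype.card V, (degList H).getD i 0 ≤ π.getD i 0

/-- `H` is weakly σ-stable. -/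
def WeaklySigmaStable {V : Type*} [Fintype V] (H : SimpleGraph V) : Prop :=
  ∀ ε : ℝ, 0 < ε → ∃ δ : ℝ, 0 < δ ∧ ∃ n₀ : ℕ, ∀ n : ℕ, n₀ ≤ n →
    ∀ π : List ℕ, π.length = n → π.Pairwise (· ≥ ·) → IsGraphic π →
      DegreeSufficient H π →
      ¬ PotentiallyGraphic H π →
      (potentialNumber H n : ℝ) - δ * n ≤ (π.sum : ℝ) →
      ∃ π' ∈ potSet H n, (seqDist π π' : ℝ) < ε * n

/-- The join `G ∨ H` of two graphs on disjoint vertex sets. -/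
def graphJoin {V : Type*} {W : Type*} (G : SimpleGraph V) (H : SimpleGraph W) :
    SimpleGraph (V ⊕ W) where
  Adj x y :=
    match x, y with
    | .inl a, .inl b => G.Adj a b
    | .inr a, .inr b => H.Adj a b
    | .inl _, .inr _ => True
    | .inr _, .inl _ => True
  symm := ⟨by
    rintro (a | a) (b | b) h
    · exact G.symm.symm _ _ h
    · trivial
    · trivial
    · exact H.symm.symm _ _ h⟩
  loopless := ⟨by
    rintro (a | a) h
    · exact G.loopless.irrefl a h
    · exact H.loopless.irrefl a h⟩

/-- The double star `S_{x,y}`: two adjacent centers (vertices `0` and `1`), with the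
first center adjacent to `x` leaves and the second to `y` leaves, so that the centers
have degrees `x+1` and `y+1`. -/
def doubleStar (x y : ℕ) : SimpleGraph (Fin (x + y + 2)) :=
  SimpleGraph.fromRel fun a b =>
    (a.val = 0 ∧ b.val = 1) ∨
    (a.val = 0 ∧ 2 ≤ b.val ∧ b.val < x + 2) ∨
    (a.val = 1 ∧ x + 2 ≤ b.val)

/-- Laying off the term at (0-based) position `i`: delete it and subtract one from
the `d_i` largest remaining terms. -/
def layOffAt (π : List ℕ) (i : ℕ) : List ℕ :=
  let d := π.getD i 0
  let rest := π.take i ++ π.drop (i + 1)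
  (rest.take d).map (· - 1) ++ rest.drop d


section Aux
open Finset

lemma gdeg_eq_filter {V : Type*} [Fintype V] (G : SimpleGraph V) [DecidableRel G.Adj] (v : V) :
    gdeg G v = (Finset.univ.filter (G.Adj v)).card := by
  rw [gdeg, Set.ncard_eq_toFinset_card']
  congr 1
  ext w
  simp

lemma gdeg_le {V : Type*} [Fintype V] (G : SimpleGraph V) (v : V) :
    gdeg G v ≤ Fintype.card V - 1 := by
  have h1 : {w | G.Adj v w} ⊆ {v}ᶜ := by
    intro w hw
    simp only [Set.mem_compl_iff, Set.mem_singleton_iff]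
    intro h
    exact G.loopless.irrefl v (h ▸ hw)
  have h2 : ({v}ᶜ : Set V).ncard = Fintype.card V - 1 := by
    have := Set.ncard_add_ncard_compl ({v} : Set V)
    rw [Nat.card_eq_fintype_card, Set.ncard_singleton] at this
    omega
  calc gdeg G v ≤ ({v}ᶜ : Set V).ncard := Set.ncard_le_ncard h1 (Set.toFinite _)
    _ ≤ Fintype.card V - 1 := by omega

/-- a vertex of full degree is adjacent to everything else -/
lemma adj_of_gdeg_full {V : Type*} [Fintype V] (G : SimpleGraph V) (v w : V)
    (h : gdeg G v = Fintype.card V - 1) (hne : w ≠ v) : G.Adj v w := by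
  have h1 : {w | G.Adj v w} ⊆ {v}ᶜ := by
    intro w hw
    simp only [Set.mem_compl_iff, Set.mem_singleton_iff]
    intro h
    exact G.loopless.irrefl v (h ▸ hw)
  have h2 : ({v}ᶜ : Set V).ncard ≤ Fintype.card V - 1 := by
    have := Set.ncard_add_ncard_compl ({v} : Set V)
    rw [Nat.card_eq_fintype_card, Set.ncard_singleton] at this
    omega
  rw [gdeg] at h
  have := Set.eq_of_subset_of_ncard_le h1 (by rw [h]; exact h2) (Set.toFinite _)
  have hw : w ∈ ({v}ᶜ : Set V) := hne
  rw [← this] at hw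
  exact hw

lemma mem_degMultiset {V : Type*} [Fintype V] (G : SimpleGraph V) (v : V) :
    gdeg G v ∈ degMultiset G :=
  Multiset.mem_map_of_mem _ (Finset.mem_univ_val v)

lemma degMultiset_card {V : Type*} [Fintype V] (G : SimpleGraph V) :
    Multiset.card (degMultiset G) = Fintype.card V := by
  rw [degMultiset, Multiset.card_map]
  rfl

lemma count_degMultiset {V : Type*} [Fintype V] (G : SimpleGraph V) (b : ℕ) :
    Multiset.count b (degMultiset G) =
      (Finset.univ.filter (fun v => gdeg G v = b)).card := by
  classical
  rw [degMultiset, Multiset.count_map]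
  rw [Finset.card, Finset.filter_val]
  congr 1
  apply Multiset.filter_congr
  intro v _
  exact eq_comm

lemma degMultiset_map_equiv {U W : Type*} [Fintype U] [Fintype W] (e : U ≃ W)
    (G : SimpleGraph U) : degMultiset (G.map e.toEmbedding) = degMultiset G := by
  rw [degMultiset, degMultiset]
  have huniv : (Finset.univ : Finset W).val = (Finset.univ : Finset U).val.map e := by
    rw [← Finset.map_univ_equiv e]
    rfl
  rw [huniv, Multiset.map_map]
  apply Multiset.map_congr rfl
  intro u _
  show gdeg (G.map e.toEmbedding) (e u) = gdeg G u
  rw [gdeg, gdeg]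
  have : {w | (G.map e.toEmbedding).Adj (e u) w} = e '' {v | G.Adj u v} := by
    ext w
    simp only [SimpleGraph.map_adj, Set.mem_setOf_eq, Set.mem_image, Equiv.coe_toEmbedding]
    constructor
    · rintro ⟨-, a, b, hab, ha, hb⟩
      exact ⟨b, by rwa [e.injective ha] at hab, hb⟩
    · rintro ⟨v, hv, rfl⟩
      exact ⟨e.injective.ne (G.ne_of_adj hv), u, v, hv, rfl, rfl⟩
  rw [this, Set.ncard_image_of_injective _ e.injective]

lemma maxDeg_le {V : Type*} [Fintype V] (G : SimpleGraph V) :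
    maxDeg G ≤ Fintype.card V - 1 :=
  Finset.sup_le fun v _ => gdeg_le G v

lemma indep_le_indepNum {V : Type*} [Fintype V] (G : SimpleGraph V) (s : Finset V)
    (hs : (s : Set V).Pairwise fun a b => ¬ G.Adj a b) : s.card ≤ _root_.indepNum G := by
  apply le_csSup
  · refine ⟨Fintype.card V, ?_⟩
    rintro j ⟨t, rfl, -⟩
    exact Finset.card_le_card (Finset.subset_univ t) |>.trans (le_of_eq (Finset.card_univ))
  · exact ⟨s, rfl, hs⟩

lemma card_set_coe {V : Type*} [Fintype V] (s : Finset V) :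
    Fintype.card ↥(s : Set V) = s.card := by
  rw [← Nat.card_eq_fintype_card, Nat.card_coe_set_eq, Set.ncard_coe_finset]

lemma induced_indep_of_maxDeg_zero {V : Type*} [Fintype V] (H : SimpleGraph V) (s : Finset V)
    (h : maxDeg (SimpleGraph.induce (s : Set V) H) = 0) :
    (s : Set V).Pairwise fun a b => ¬ H.Adj a b := by
  intro a ha b hb hne hadj
  have hadj' : (SimpleGraph.induce (s : Set V) H).Adj ⟨a, ha⟩ ⟨b, hb⟩ := hadj
  have h1 : 1 ≤ gdeg (SimpleGraph.induce (s : Set V) H) ⟨a, ha⟩ := by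
    rw [gdeg]
    have hm : (⟨b, hb⟩ : ↥(s : Set V)) ∈
        {w | (SimpleGraph.induce (s : Set V) H).Adj ⟨a, ha⟩ w} := hadj'
    have hpos := (Set.ncard_pos (Set.toFinite _)).mpr ⟨_, hm⟩
    omega
  have h2 := Finset.le_sup (f := gdeg (SimpleGraph.induce (s : Set V) H))
    (Finset.mem_univ (⟨a, ha⟩ : ↥(s : Set V)))
  rw [← maxDeg] at h2
  omega

lemma nabla_nonempty_aux {V : Type*} [Fintype V] (H : SimpleGraph V) (i : ℕ)
    (hik : i ≤ Fintype.card V) :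
    {d | ∃ s : Finset V, s.card = i ∧ maxDeg (SimpleGraph.induce (s : Set V) H) = d}.Nonempty := by
  obtain ⟨s, -, hs⟩ := Finset.exists_subset_card_eq (s := (Finset.univ : Finset V)) (n := i)
    (by rwa [Finset.card_univ])
  exact ⟨_, s, hs, rfl⟩

lemma nabla_pos {V : Type*} [Fintype V] (H : SimpleGraph V) (i : ℕ)
    (hi : _root_.indepNum H + 1 ≤ i) (hik : i ≤ Fintype.card V) : 1 ≤ nabla H i := by
  apply le_csInf (nabla_nonempty_aux H i hik)
  rintro d ⟨s, hcard, hd⟩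
  by_contra hlt
  push_neg at hlt
  have hd0 : maxDeg (SimpleGraph.induce (s : Set V) H) = 0 := by omega
  have hindep := induced_indep_of_maxDeg_zero H s hd0
  have := indep_le_indepNum H s hindep
  omega

lemma nabla_le {V : Type*} [Fintype V] (H : SimpleGraph V) (i : ℕ)
    (hik : i ≤ Fintype.card V) : nabla H i ≤ i - 1 := by
  obtain ⟨s, -, hs⟩ := Finset.exists_subset_card_eq (s := (Finset.univ : Finset V)) (n := i)
    (by rwa [Finset.card_univ])
  have h1 : nabla H i ≤ maxDeg (SimpleGraph.induce (s : Set V) H) :=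
    csInf_le ⟨0, fun j _ => Nat.zero_le j⟩ ⟨s, hs, rfl⟩
  have h2 := maxDeg_le (SimpleGraph.induce (s : Set V) H)
  rw [card_set_coe, hs] at h2
  omega

lemma nabla_exists_high_deg {V : Type*} [Fintype V] (H : SimpleGraph V) (i : ℕ)
    (s : Finset V) (hcard : s.card = i) (hpos : 1 ≤ nabla H i) :
    ∃ v : ↥(s : Set V), nabla H i ≤ gdeg (SimpleGraph.induce (s : Set V) H) v := by
  have h1 : nabla H i ≤ maxDeg (SimpleGraph.induce (s : Set V) H) :=
    csInf_le ⟨0, fun j _ => Nat.zero_le j⟩ ⟨s, hcard, rfl⟩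
  by_contra hc
  push_neg at hc
  have hle : maxDeg (SimpleGraph.induce (s : Set V) H) ≤ nabla H i - 1 :=
    Finset.sup_le fun v _ => by have := hc v; omega
  omega

def tp (a m x d : ℕ) : List ℕ :=
  let base := List.replicate a x ++ List.replicate m d
  if Even base.sum then base else base.dropLast ++ [d - 1]

lemma base_sum (a m x d : ℕ) :
    (List.replicate a x ++ List.replicate m d).sum = a * x + m * d := by
  simp [List.sum_replicate, smul_eq_mul]

lemma base_split (a m x d : ℕ) (hm : 1 ≤ m) :
    List.replicate a x ++ List.replicate m d
      = (List.replicate a x ++ List.replicate (m - 1) d) ++ [d] := by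
  conv_lhs => rw [show m = (m - 1) + 1 by omega]
  rw [List.replicate_succ', List.append_assoc]

lemma tp_odd_eq (a m x d : ℕ) (hm : 1 ≤ m)
    (h : ¬ Even (a * x + m * d)) :
    tp a m x d = List.replicate a x ++ (List.replicate (m - 1) d ++ [d - 1]) := by
  rw [tp]
  simp only [base_sum, if_neg h]
  rw [base_split a m x d hm, List.dropLast_concat, List.append_assoc]

lemma tp_even_eq (a m x d : ℕ) (h : Even (a * x + m * d)) :
    tp a m x d = List.replicate a x ++ List.replicate m d := by
  rw [tp]
  simp only [base_sum, if_pos h]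

lemma tp_length (a m x d : ℕ) (hm : 1 ≤ m) : (tp a m x d).length = a + m := by
  by_cases h : Even (a * x + m * d)
  · rw [tp_even_eq a m x d h]; simp
  · rw [tp_odd_eq a m x d hm h]; simp; omega

lemma tp_sum_even (a m x d : ℕ) (hm : 1 ≤ m) (hd : 1 ≤ d) : Even (tp a m x d).sum := by
  by_cases h : Even (a * x + m * d)
  · rw [tp_even_eq a m x d h, base_sum]; exact h
  · rw [tp_odd_eq a m x d hm h]
    simp only [List.sum_append, List.sum_replicate, smul_eq_mul, List.sum_cons, List.sum_nil]
    have h2 : m * d = (m - 1) * d + d := by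
      conv_lhs => rw [show m = (m - 1) + 1 by omega]
      ring
    rw [h2] at h
    simp only [Nat.even_iff] at h ⊢
    omega

lemma sorted_ge_replicate (n c : ℕ) : (List.replicate n c).Pairwise (· ≥ ·) :=
  List.pairwise_replicate.mpr (Or.inr le_rfl)

lemma tp_sorted (a m x d : ℕ) (hdx : d ≤ x) : (tp a m x d).Pairwise (· ≥ ·) := by
  by_cases h : Even ((List.replicate a x ++ List.replicate m d).sum)
  · rw [tp, if_pos h]
    refine List.pairwise_append.mpr ⟨sorted_ge_replicate a x, sorted_ge_replicate m d, ?_⟩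
    intro u hu v hv
    rw [List.eq_of_mem_replicate hu, List.eq_of_mem_replicate hv]
    exact hdx
  · rw [tp, if_neg h]
    have hsub : (List.replicate a x ++ List.replicate m d).dropLast.Sublist
        (List.replicate a x ++ List.replicate m d) := List.dropLast_sublist _
    have hsorted : (List.replicate a x ++ List.replicate m d).dropLast.Pairwise (· ≥ ·) := by
      apply List.Pairwise.sublist hsub
      refine List.pairwise_append.mpr ⟨sorted_ge_replicate a x, sorted_ge_replicate m d, ?_⟩
      intro u hu v hv
      rw [List.eq_of_mem_replicate hu, List.eq_of_mem_replicate hv]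
      exact hdx
    refine List.pairwise_append.mpr ⟨hsorted, List.pairwise_singleton _ _, ?_⟩
    intro u hu v hv
    rw [List.mem_singleton] at hv
    subst hv
    have hmem := hsub.mem hu
    rcases List.mem_append.mp hmem with h1 | h1
    · rw [List.eq_of_mem_replicate h1]; omega
    · rw [List.eq_of_mem_replicate h1]; omega

lemma tp_mem (a m x d y : ℕ) (hm : 1 ≤ m) (hy : y ∈ tp a m x d) : y = x ∨ y ≤ d := by
  by_cases h : Even (a * x + m * d)
  · rw [tp_even_eq a m x d h] at hy
    rcases List.mem_append.mp hy with h1 | h1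
    · exact Or.inl (List.eq_of_mem_replicate h1)
    · exact Or.inr (le_of_eq (List.eq_of_mem_replicate h1))
  · rw [tp_odd_eq a m x d hm h] at hy
    rcases List.mem_append.mp hy with h1 | h1
    · exact Or.inl (List.eq_of_mem_replicate h1)
    · rcases List.mem_append.mp h1 with h2 | h2
      · exact Or.inr (le_of_eq (List.eq_of_mem_replicate h2))
      · simp at h2
        omega

lemma tp_count (a m x d : ℕ) (hm : 1 ≤ m) (hdx : d < x) :
    Multiset.count x (tp a m x d : Multiset ℕ) = a := by
  by_cases h : Even (a * x + m * d)
  · rw [tp_even_eq a m x d h]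
    rw [Multiset.coe_count]
    simp [List.count_append, List.count_replicate,
      (show ¬ x = d by omega), (show ¬ d = x by omega)]
  · rw [tp_odd_eq a m x d hm h]
    rw [Multiset.coe_count]
    simp [List.count_append, List.count_replicate,
      (show ¬ x = d by omega), (show ¬ x = d - 1 by omega),
      (show ¬ d = x by omega), (show ¬ d - 1 = x by omega)]

section Aset

def Aset (m t : ℕ) : Finset ℕ := Finset.Icc 1 t ∪ Finset.Icc (m - t) (m - 1)

lemma mem_Aset {m t s : ℕ} : s ∈ Aset m t ↔ (1 ≤ s ∧ s ≤ t) ∨ (m - t ≤ s ∧ s ≤ m - 1) := by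
  simp [Aset]

lemma Aset_card {m t : ℕ} (h : 2 * t + 2 ≤ m) : (Aset m t).card = 2 * t := by
  rw [Aset, Finset.card_union_of_disjoint]
  · rw [Nat.card_Icc, Nat.card_Icc]
    omega
  · rw [Finset.disjoint_left]
    intro s hs1 hs2
    rw [Finset.mem_Icc] at hs1 hs2
    omega

lemma Aset_symm {m t s : ℕ} (h : 2 * t + 2 ≤ m) (hs : s ∈ Aset m t) : m - s ∈ Aset m t := by
  rw [mem_Aset] at hs ⊢
  omega

lemma Aset_bounds {m t s : ℕ} (h : 2 * t + 2 ≤ m) (hs : s ∈ Aset m t) : 1 ≤ s ∧ s ≤ m - 1 := by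
  rw [mem_Aset] at hs
  omega

end Aset

section Low

/-- matching partner relation on `ZMod m` : `x` matched with `x + m/2`. -/
def MAdj (m : ℕ) (x y : ZMod m) : Prop :=
  (x.val < m / 2 ∧ y = x + ((m / 2 : ℕ) : ZMod m)) ∨
  (y.val < m / 2 ∧ x = y + ((m / 2 : ℕ) : ZMod m))

/-- the low graph: a circulant, together with a near-perfect matching when `mat` is true. -/
def lowG (m t : ℕ) (mat : Bool) : SimpleGraph (ZMod m) where
  Adj x y := x ≠ y ∧ (((x - y).val ∈ Aset m t ∨ (y - x).val ∈ Aset m t) ∨ (mat ∧ MAdj m x y))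
  symm := ⟨by
    rintro x y ⟨hne, h | h⟩
    · exact ⟨hne.symm, Or.inl h.symm⟩
    · exact ⟨hne.symm, Or.inr ⟨h.1, h.2.symm⟩⟩⟩
  loopless := ⟨fun x h => h.1 rfl⟩

variable {m t : ℕ} [NeZero m]

instance {x y : ZMod m} : Decidable (MAdj m x y) := by
  unfold MAdj
  infer_instance

lemma zmod_natCast_val (x : ZMod m) : ((x.val : ℕ) : ZMod m) = x :=
  ZMod.natCast_rightInverse x

lemma sub_val_symm (h : 2 * t + 2 ≤ m) {x y : ZMod m} (hne : x ≠ y)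
    (hA : (x - y).val ∈ Aset m t) : (y - x).val ∈ Aset m t := by
  have hsub : x - y ≠ 0 := sub_ne_zero.mpr hne
  have : y - x = -(x - y) := by ring
  rw [this, ZMod.neg_val, if_neg hsub]
  exact Aset_symm h hA

lemma lowG_adj_iff (h : 2 * t + 2 ≤ m) {mat : Bool} {x y : ZMod m} :
    (lowG m t mat).Adj x y ↔ x ≠ y ∧ ((x - y).val ∈ Aset m t ∨ (mat ∧ MAdj m x y)) := by
  constructor
  · rintro ⟨hne, (hA | hA) | hM⟩
    · exact ⟨hne, Or.inl hA⟩
    · exact ⟨hne, Or.inl (by simpa using sub_val_symm h hne.symm hA)⟩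
    · exact ⟨hne, Or.inr hM⟩
  · rintro ⟨hne, hA | hM⟩
    · exact ⟨hne, Or.inl (Or.inl hA)⟩
    · exact ⟨hne, Or.inr hM⟩

instance : DecidableRel (lowG m t mat).Adj := fun x y => by
  unfold lowG MAdj
  infer_instance

lemma circ_card (h : 2 * t + 2 ≤ m) (x : ZMod m) :
    (Finset.univ.filter (fun y => x ≠ y ∧ (x - y).val ∈ Aset m t)).card = 2 * t := by
  rw [← Aset_card h]
  apply Finset.card_bij' (i := fun y _ => (x - y).val) (j := fun s _ => x - (s : ZMod m))
  · intro y hy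
    exact (Finset.mem_filter.mp hy).2.2
  · intro s hs
    obtain ⟨hs1, hs2⟩ := Aset_bounds h hs
    have hsm : s < m := by omega
    refine Finset.mem_filter.mpr ⟨Finset.mem_univ _, ?_, ?_⟩
    · intro hEq
      have : (s : ZMod m) = 0 := by
        have := congrArg (x - ·) hEq
        simpa using this.symm
      have := congrArg ZMod.val this
      rw [ZMod.val_cast_of_lt hsm, ZMod.val_zero] at this
      omega
    · have : x - (x - (s : ZMod m)) = (s : ZMod m) := by ring
      rw [this, ZMod.val_cast_of_lt hsm]
      exact hs
  · intro y _
    rw [zmod_natCast_val]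
    ring
  · intro s hs
    obtain ⟨hs1, hs2⟩ := Aset_bounds h hs
    have hsm : s < m := by omega
    have : x - (x - (s : ZMod m)) = (s : ZMod m) := by ring
    rw [this, ZMod.val_cast_of_lt hsm]

lemma madj_filter_lt (h : 5 ≤ m) (x : ZMod m) (hx : x.val < m / 2) :
    (Finset.univ.filter (fun y => x ≠ y ∧ MAdj m x y)) = {x + ((m / 2 : ℕ) : ZMod m)} := by
  have hq : m / 2 < m := by omega
  have hvq : ((m / 2 : ℕ) : ZMod m).val = m / 2 := ZMod.val_cast_of_lt hq
  ext y
  simp only [Finset.mem_filter, Finset.mem_univ, true_and, Finset.mem_singleton]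
  constructor
  · rintro ⟨hne, (⟨-, rfl⟩ | ⟨hy, rfl⟩)⟩
    · rfl
    · exfalso
      rw [ZMod.val_add, hvq, Nat.mod_eq_of_lt (by omega)] at hx
      omega
  · rintro rfl
    have hval : (x + ((m / 2 : ℕ) : ZMod m)).val = x.val + m / 2 := by
      rw [ZMod.val_add, hvq, Nat.mod_eq_of_lt (by omega)]
    refine ⟨?_, Or.inl ⟨hx, rfl⟩⟩
    intro hEq
    have := congrArg ZMod.val hEq
    rw [hval] at this
    omega

lemma madj_filter_ge (h : 5 ≤ m) (x : ZMod m) (hx : m / 2 ≤ x.val) (hx2 : x.val < 2 * (m / 2)) :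
    (Finset.univ.filter (fun y => x ≠ y ∧ MAdj m x y)) = {((x.val - m / 2 : ℕ) : ZMod m)} := by
  have hq : m / 2 < m := by omega
  have hvq : ((m / 2 : ℕ) : ZMod m).val = m / 2 := ZMod.val_cast_of_lt hq
  have hxm := ZMod.val_lt x
  have hy0 : ((x.val - m / 2 : ℕ) : ZMod m).val = x.val - m / 2 :=
    ZMod.val_cast_of_lt (by omega)
  have hsum : ((x.val - m / 2 : ℕ) : ZMod m) + ((m / 2 : ℕ) : ZMod m) = x := by
    rw [← Nat.cast_add, Nat.sub_add_cancel hx, zmod_natCast_val]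
  ext y
  simp only [Finset.mem_filter, Finset.mem_univ, true_and, Finset.mem_singleton]
  constructor
  · rintro ⟨hne, (⟨hlt, rfl⟩ | ⟨hy, rfl⟩)⟩
    · omega
    · have hv : (y + ((m / 2 : ℕ) : ZMod m)).val = y.val + m / 2 := by
        rw [ZMod.val_add, hvq, Nat.mod_eq_of_lt (by omega)]
      rw [hv]
      have h2 : y.val + m / 2 - m / 2 = y.val := by omega
      rw [h2, zmod_natCast_val]
  · rintro rfl
    refine ⟨?_, Or.inr ⟨by omega, hsum.symm⟩⟩
    intro hEq
    have := congrArg ZMod.val hEq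
    rw [hy0] at this
    omega

lemma madj_filter_top (h : 5 ≤ m) (x : ZMod m) (hx : 2 * (m / 2) ≤ x.val) :
    (Finset.univ.filter (fun y => x ≠ y ∧ MAdj m x y)) = ∅ := by
  have hq : m / 2 < m := by omega
  have hvq : ((m / 2 : ℕ) : ZMod m).val = m / 2 := ZMod.val_cast_of_lt hq
  have hxm := ZMod.val_lt x
  ext y
  simp only [Finset.mem_filter, Finset.mem_univ, true_and, Finset.notMem_empty,
    iff_false, not_and]
  rintro hne (⟨hlt, rfl⟩ | ⟨hy, rfl⟩)
  · omega
  · have hv : (y + ((m / 2 : ℕ) : ZMod m)).val = y.val + m / 2 := by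
      rw [ZMod.val_add, hvq, Nat.mod_eq_of_lt (by omega)]
    omega

end Low

section LowDeg
variable {m t : ℕ} [NeZero m]

lemma lowG_deg_false (h : 2 * t + 2 ≤ m) (x : ZMod m) : gdeg (lowG m t false) x = 2 * t := by
  rw [gdeg_eq_filter]
  have heq : Finset.univ.filter ((lowG m t false).Adj x)
      = Finset.univ.filter (fun y => x ≠ y ∧ (x - y).val ∈ Aset m t) := by
    apply Finset.filter_congr
    intro y _
    rw [lowG_adj_iff h]
    simp
  rw [heq, circ_card h]

lemma lowG_deg_true (h : 2 * t + 2 ≤ m) (h5 : 5 ≤ m) (x : ZMod m) :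
    gdeg (lowG m t true) x = if 2 * (m / 2) ≤ x.val then 2 * t else 2 * t + 1 := by
  have hq : m / 2 < m := by omega
  have hvq : ((m / 2 : ℕ) : ZMod m).val = m / 2 := ZMod.val_cast_of_lt hq
  have hqne : ((m / 2 : ℕ) : ZMod m) ≠ 0 := by
    intro h0
    rw [h0, ZMod.val_zero] at hvq
    omega
  rw [gdeg_eq_filter]
  have hsplit : Finset.univ.filter ((lowG m t true).Adj x)
      = Finset.univ.filter (fun y => x ≠ y ∧ (x - y).val ∈ Aset m t)
        ∪ Finset.univ.filter (fun y => x ≠ y ∧ MAdj m x y) := by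
    ext y
    simp only [Finset.mem_filter, Finset.mem_union, Finset.mem_univ, true_and]
    rw [lowG_adj_iff h]
    tauto
  have hdisj : Disjoint (Finset.univ.filter (fun y => x ≠ y ∧ (x - y).val ∈ Aset m t))
      (Finset.univ.filter (fun y => x ≠ y ∧ MAdj m x y)) := by
    rw [Finset.disjoint_left]
    intro y hy1 hy2
    rw [Finset.mem_filter] at hy1 hy2
    obtain ⟨-, hne, hA⟩ := hy1
    obtain ⟨-, -, hM⟩ := hy2
    rcases hM with ⟨-, rfl⟩ | ⟨-, rfl⟩
    · have hxy : x - (x + ((m / 2 : ℕ) : ZMod m)) = -((m / 2 : ℕ) : ZMod m) := by ring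
      rw [hxy, ZMod.neg_val, if_neg hqne, hvq] at hA
      rw [mem_Aset] at hA
      omega
    · have hxy : y + ((m / 2 : ℕ) : ZMod m) - y = ((m / 2 : ℕ) : ZMod m) := by ring
      rw [hxy, hvq] at hA
      rw [mem_Aset] at hA
      omega
  rw [hsplit, Finset.card_union_of_disjoint hdisj, circ_card h]
  have hxm := ZMod.val_lt x
  rcases Nat.lt_or_ge x.val (m / 2) with hx | hx
  · rw [madj_filter_lt h5 x hx, Finset.card_singleton, if_neg (by omega)]
  · rcases Nat.lt_or_ge x.val (2 * (m / 2)) with hx2 | hx2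
    · rw [madj_filter_ge h5 x hx hx2, Finset.card_singleton, if_neg (by omega)]
    · rw [madj_filter_top h5 x hx2, Finset.card_empty, if_pos (by omega)]
      omega

lemma lowG_degMultiset_false (h : 2 * t + 2 ≤ m) :
    degMultiset (lowG m t false) = Multiset.replicate m (2 * t) := by
  rw [degMultiset]
  rw [Multiset.map_congr rfl (fun x _ => lowG_deg_false h x), Multiset.map_const']
  congr 1
  rw [← Finset.card_def, Finset.card_univ, ZMod.card]

lemma lowG_degMultiset_true_even (h : 2 * t + 2 ≤ m) (h5 : 5 ≤ m) (hm : Even m) :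
    degMultiset (lowG m t true) = Multiset.replicate m (2 * t + 1) := by
  rw [degMultiset]
  have : ∀ x : ZMod m, gdeg (lowG m t true) x = 2 * t + 1 := by
    intro x
    rw [lowG_deg_true h h5 x, if_neg]
    have hxm := ZMod.val_lt x
    rw [Nat.even_iff] at hm
    omega
  rw [Multiset.map_congr rfl (fun x _ => this x), Multiset.map_const']
  congr 1
  rw [← Finset.card_def, Finset.card_univ, ZMod.card]

lemma lowG_degMultiset_true_odd (h : 2 * t + 2 ≤ m) (h5 : 5 ≤ m) (hm : ¬ Even m) :
    degMultiset (lowG m t true)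
      = (2 * t) ::ₘ Multiset.replicate (m - 1) (2 * t + 1) := by
  classical
  rw [Nat.even_iff] at hm
  set z : ZMod m := ((m - 1 : ℕ) : ZMod m) with hz
  have hzval : z.val = m - 1 := ZMod.val_cast_of_lt (by omega)
  have hcons : (Finset.univ : Finset (ZMod m)).val = z ::ₘ (Finset.univ.erase z).val := by
    rw [Finset.erase_val, Multiset.cons_erase (Finset.mem_univ_val z)]
  rw [degMultiset, hcons, Multiset.map_cons]
  congr 1
  · rw [lowG_deg_true h h5 z, if_pos (by omega)]
  · have hall : ∀ y ∈ (Finset.univ.erase z).val, gdeg (lowG m t true) y = 2 * t + 1 := by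
      intro y hy
      have hyz : y ≠ z := (Finset.mem_erase.mp hy).1
      have hym := ZMod.val_lt y
      rw [lowG_deg_true h h5 y, if_neg]
      intro hge
      apply hyz
      apply ZMod.val_injective
      rw [hzval]
      omega
    rw [Multiset.map_congr rfl hall, Multiset.map_const']
    congr 1
    rw [← Finset.card_def, Finset.card_erase_of_mem (Finset.mem_univ z), Finset.card_univ,
      ZMod.card]

end LowDeg

section Join

lemma ncard_compl_singleton {V : Type*} [Fintype V] (v : V) :
    ({v}ᶜ : Set V).ncard = Fintype.card V - 1 := by
  have h := Set.ncard_add_ncard_compl ({v} : Set V)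
  rw [Nat.card_eq_fintype_card, Set.ncard_singleton] at h
  omega

variable {a m : ℕ} [NeZero m] (L : SimpleGraph (ZMod m))

lemma join_deg_inl (x : Fin a) :
    gdeg (graphJoin (⊤ : SimpleGraph (Fin a)) L) (Sum.inl x) = (a - 1) + m := by
  rw [gdeg]
  have hset : {w | (graphJoin (⊤ : SimpleGraph (Fin a)) L).Adj (Sum.inl x) w}
      = Sum.inl '' ({x}ᶜ : Set (Fin a)) ∪ Sum.inr '' (Set.univ : Set (ZMod m)) := by
    ext w
    rcases w with y | z
    · simp only [Set.mem_union, Set.mem_image, Set.mem_setOf_eq]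
      constructor
      · intro hadj
        exact Or.inl ⟨y, by simpa using (show (⊤ : SimpleGraph (Fin a)).Adj x y from hadj).symm.ne,
          rfl⟩
      · rintro (⟨b, hb, hb2⟩ | ⟨b, -, hb2⟩)
        · obtain rfl : b = y := Sum.inl_injective hb2
          show (⊤ : SimpleGraph (Fin a)).Adj x b
          simp only [SimpleGraph.top_adj]
          intro hEq
          exact hb (by simp [hEq])
        · cases hb2
    · simp only [Set.mem_union, Set.mem_image, Set.mem_setOf_eq]
      constructor
      · intro; exact Or.inr ⟨z, trivial, rfl⟩
      · intro; trivial
  rw [hset, Set.ncard_union_eq ?hd (Set.toFinite _) (Set.toFinite _)]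
  case hd =>
    rw [Set.disjoint_left]
    rintro w ⟨b, -, rfl⟩ ⟨c, -, hc⟩
    exact Sum.inl_ne_inr hc.symm
  rw [Set.ncard_image_of_injective _ Sum.inl_injective,
    Set.ncard_image_of_injective _ Sum.inr_injective,
    ncard_compl_singleton, Set.ncard_univ, Nat.card_eq_fintype_card, ZMod.card,
    Fintype.card_fin]

lemma join_deg_inr (z : ZMod m) :
    gdeg (graphJoin (⊤ : SimpleGraph (Fin a)) L) (Sum.inr z) = a + gdeg L z := by
  rw [gdeg, gdeg]
  have hset : {w | (graphJoin (⊤ : SimpleGraph (Fin a)) L).Adj (Sum.inr z) w}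
      = Sum.inl '' (Set.univ : Set (Fin a)) ∪ Sum.inr '' {y | L.Adj z y} := by
    ext w
    rcases w with y | y
    · simp only [Set.mem_union, Set.mem_image, Set.mem_setOf_eq]
      constructor
      · intro; exact Or.inl ⟨y, trivial, rfl⟩
      · intro; trivial
    · simp only [Set.mem_union, Set.mem_image, Set.mem_setOf_eq]
      constructor
      · intro hadj
        exact Or.inr ⟨y, hadj, rfl⟩
      · rintro (⟨b, -, hb⟩ | ⟨b, hb, hb2⟩)
        · cases hb
        · cases hb2
          exact hb
  rw [hset, Set.ncard_union_eq ?hd (Set.toFinite _) (Set.toFinite _)]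
  case hd =>
    rw [Set.disjoint_left]
    rintro w ⟨b, -, rfl⟩ ⟨c, -, hc⟩
    exact Sum.inl_ne_inr hc.symm
  rw [Set.ncard_image_of_injective _ Sum.inl_injective,
    Set.ncard_image_of_injective _ Sum.inr_injective,
    Set.ncard_univ, Nat.card_eq_fintype_card, Fintype.card_fin]

lemma join_degMultiset :
    degMultiset (graphJoin (⊤ : SimpleGraph (Fin a)) L)
      = Multiset.replicate a ((a - 1) + m) + (degMultiset L).map (a + ·) := by
  rw [degMultiset]
  have huniv : (Finset.univ : Finset (Fin a ⊕ ZMod m)).val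
      = (Finset.univ : Finset (Fin a)).val.map Sum.inl
        + (Finset.univ : Finset (ZMod m)).val.map Sum.inr := by
    rw [← Finset.univ_disjSum_univ, Finset.val_disjSum]
    rfl
  rw [huniv, Multiset.map_add, Multiset.map_map, Multiset.map_map]
  congr 1
  · have h1 := Multiset.map_congr
      (f := gdeg (graphJoin (⊤ : SimpleGraph (Fin a)) L) ∘ Sum.inl)
      (g := fun _ : Fin a => (a - 1) + m)
      (s := (Finset.univ : Finset (Fin a)).val) (t := (Finset.univ : Finset (Fin a)).val) rfl
      (fun x _ => join_deg_inl L x)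
    rw [h1, Multiset.map_const']
    congr 1
    rw [← Finset.card_def, Finset.card_univ, Fintype.card_fin]
  · have h1 := Multiset.map_congr
      (f := gdeg (graphJoin (⊤ : SimpleGraph (Fin a)) L) ∘ Sum.inr)
      (g := fun z : ZMod m => a + gdeg L z)
      (s := (Finset.univ : Finset (ZMod m)).val) (t := (Finset.univ : Finset (ZMod m)).val) rfl
      (fun z _ => join_deg_inr L z)
    rw [h1, degMultiset, Multiset.map_map]
    rfl

end Join

end Aux


section Realize
open Finset

lemma parity_link (a m n r : ℕ) (hn : n = a + m) (hm : 1 ≤ m) :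
    Even (a * (n - 1) + m * (a + r)) ↔ Even (m * r) := by
  rcases Nat.eq_zero_or_pos a with rfl | ha
  · simp
  · have h2 : n - 1 = (a - 1) + m := by omega
    rw [h2, Nat.mul_add, Nat.mul_add]
    obtain ⟨c, hc⟩ : Even (a * (a - 1)) := by
      have h3 := Nat.even_mul_succ_self (a - 1)
      rw [Nat.sub_add_cancel ha] at h3
      rwa [mul_comm]
    rw [mul_comm a m]
    simp only [Nat.even_iff] at *
    omega

lemma repl_high (a m n : ℕ) (hn : n = a + m) (hm : 1 ≤ m) :
    Multiset.replicate a ((a - 1) + m) = Multiset.replicate a (n - 1) := by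
  cases a with
  | zero => rfl
  | succ a' => congr 1; omega

lemma tp_realizable (a m r n : ℕ) [NeZero m] (hn : n = a + m) (hm : 2 * r + 5 ≤ m) :
    ∃ G : SimpleGraph (Fin a ⊕ ZMod m), degMultiset G = ((tp a m (n - 1) (a + r)) : Multiset ℕ) := by
  have hm1 : 1 ≤ m := by omega
  have h5 : 5 ≤ m := by omega
  rcases Nat.even_or_odd r with hr | hr
  · -- r even : plain circulant
    set t := r / 2 with ht
    have hrt : r = 2 * t := by
      rcases hr with ⟨c, hc⟩
      omega
    have h2t : 2 * t + 2 ≤ m := by omega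
    refine ⟨graphJoin (⊤ : SimpleGraph (Fin a)) (lowG m t false), ?_⟩
    rw [join_degMultiset, lowG_degMultiset_false h2t, Multiset.map_replicate]
    have heven : Even (a * (n - 1) + m * (a + r)) := by
      rw [parity_link a m n r hn hm1]
      exact (Nat.even_mul).mpr (Or.inr hr)
    rw [tp_even_eq _ _ _ _ heven, ← Multiset.coe_add, Multiset.coe_replicate,
      Multiset.coe_replicate, repl_high a m n hn hm1]
    congr 2
    omega
  · -- r odd
    set t := r / 2 with ht
    have hrt : r = 2 * t + 1 := by
      rcases hr with ⟨c, hc⟩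
      omega
    have h2t : 2 * t + 2 ≤ m := by omega
    refine ⟨graphJoin (⊤ : SimpleGraph (Fin a)) (lowG m t true), ?_⟩
    rw [join_degMultiset]
    rcases Nat.even_or_odd m with hme | hmo
    · rw [lowG_degMultiset_true_even h2t h5 hme, Multiset.map_replicate]
      have heven : Even (a * (n - 1) + m * (a + r)) := by
        rw [parity_link a m n r hn hm1]
        exact (Nat.even_mul).mpr (Or.inl hme)
      rw [tp_even_eq _ _ _ _ heven, ← Multiset.coe_add, Multiset.coe_replicate,
        Multiset.coe_replicate, repl_high a m n hn hm1]
      congr 2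
      omega
    · have hodd : ¬ Even (a * (n - 1) + m * (a + r)) := by
        rw [parity_link a m n r hn hm1, Nat.even_mul]
        rw [Nat.odd_iff] at hmo
        rcases hr with ⟨c, hc⟩
        push_neg
        constructor <;> rw [Nat.even_iff] <;> omega
      rw [lowG_degMultiset_true_odd h2t h5 (by rw [Nat.not_even_iff_odd]; exact hmo)]
      rw [tp_odd_eq _ _ _ _ hm1 hodd]
      rw [Multiset.map_cons, Multiset.map_replicate]
      rw [← Multiset.coe_add, ← Multiset.coe_add, Multiset.coe_replicate, Multiset.coe_replicate,
        Multiset.coe_singleton, repl_high a m n hn hm1]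
      congr 1
      rw [add_comm (Multiset.replicate (m - 1) (a + r)) {a + r - 1}, Multiset.singleton_add]
      congr 1
      · omega
      · congr 1
        omega

lemma tp_isGraphic (a m r n : ℕ) (hn : n = a + m) (hm : 2 * r + 5 ≤ m) :
    IsGraphic (tp a m (n - 1) (a + r)) := by
  haveI : NeZero m := ⟨by omega⟩
  obtain ⟨G, hG⟩ := tp_realizable a m r n hn hm
  have hcard : Fintype.card (Fin a ⊕ ZMod m) = (tp a m (n - 1) (a + r)).length := by
    rw [tp_length _ _ _ _ (by omega), Fintype.card_sum, Fintype.card_fin, ZMod.card]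
  let e := Fintype.equivFinOfCardEq hcard
  exact ⟨G.map e.toEmbedding, by rw [degMultiset_map_equiv e G, hG]⟩

end Realize

/-- **Lower bound for the potential number.** For `H` with at least one nontrivial
component and `n` sufficiently large, no `π̃_i(H,n)` is potentially `H`-graphic, and hence
`σ(H,n) ≥ max_i σ(π̃_i(H,n)) + 2`. -/
theorem tildePiNotPotentially {V : Type} [Fintype V] (H : SimpleGraph V)
    (hEdge : ∃ u v : V, H.Adj u v) :
    ∃ N : ℕ, ∀ n : ℕ, N ≤ n →
      (∀ i ∈ Finset.Icc (_root_.indepNum H + 1) (Fintype.card V),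
          ¬ PotentiallyGraphic H (tildePi H i n)) ∧
      (Finset.Icc (_root_.indepNum H + 1) (Fintype.card V)).sup
          (fun i => (tildePi H i n).sum) + 2 ≤ potentialNumber H n := by
  classical
  obtain ⟨u0, v0, huv0⟩ := hEdge
  have hk2 : 2 ≤ Fintype.card V := by
    haveI : Nontrivial V := ⟨u0, v0, huv0.ne⟩
    exact Fintype.one_lt_card
  set k := Fintype.card V with hkdef
  refine ⟨4 * k + 20, fun n hn => ?_⟩
  have hmain : ∀ i ∈ Finset.Icc (_root_.indepNum H + 1) k,
      ¬ PotentiallyGraphic H (tildePi H i n) := by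
    intro i hi
    rw [Finset.mem_Icc] at hi
    obtain ⟨hi1, hi2⟩ := hi
    have hna1 : 1 ≤ nabla H i := nabla_pos H i hi1 hi2
    have hna2 : nabla H i ≤ i - 1 := nabla_le H i hi2
    have hi0 : 1 ≤ i := by omega
    set a := k - i with hadef
    set m := n - k + i with hmdef
    set d := k - i + nabla H i - 1 with hddef
    set r := nabla H i - 1 with hrdef
    have htp : tildePi H i n = tp a m (n - 1) d := rfl
    clear_value a m d r
    have hdar : d = a + r := by omega
    have hm1 : 1 ≤ m := by omega
    have hdk : d ≤ k - 2 := by omega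
    have hL : (tildePi H i n).length = n := by
      rw [htp, tp_length a m (n - 1) d hm1]
      omega
    rintro ⟨G, hdeg, f, hinj, hmap⟩
    have hdeg' : degMultiset G = ((tp a m (n - 1) d : List ℕ) : Multiset ℕ) :=
      hdeg.trans (congrArg _ htp)
    have hcardFin : Fintype.card (Fin (tildePi H i n).length) = n := by
      rw [Fintype.card_fin, hL]
    -- every degree is n-1 or ≤ d
    have hF1 : ∀ v, gdeg G v = n - 1 ∨ gdeg G v ≤ d := by
      intro v
      have hmem : gdeg G v ∈ (tp a m (n - 1) d : Multiset ℕ) := by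
        rw [← hdeg']; exact mem_degMultiset G v
      rw [Multiset.mem_coe] at hmem
      exact tp_mem a m (n - 1) d _ hm1 hmem
    -- the set of full-degree vertices has cardinality a
    set HiSet := Finset.univ.filter (fun v => gdeg G v = n - 1) with hHiSet
    have hF2 : HiSet.card = a := by
      rw [hHiSet, ← count_degMultiset G (n - 1), hdeg']
      exact tp_count a m (n - 1) d hm1 (by omega)
    -- low-mapped vertices of H
    set T := Finset.univ.filter (fun u : V => gdeg G (f u) = n - 1) with hT
    set S := Finset.univ.filter (fun u : V => gdeg G (f u) ≤ d) with hS
    have hTcard : T.card ≤ a := by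
      have h1 : T.image f ⊆ HiSet := by
        intro x hx
        rw [Finset.mem_image] at hx
        obtain ⟨u, hu, rfl⟩ := hx
        rw [hT, Finset.mem_filter] at hu
        rw [hHiSet, Finset.mem_filter]
        exact ⟨Finset.mem_univ _, hu.2⟩
      calc T.card = (T.image f).card := (Finset.card_image_of_injective T hinj).symm
        _ ≤ HiSet.card := Finset.card_le_card h1
        _ = a := hF2
    have hScard : i ≤ S.card := by
      have hunion : (Finset.univ : Finset V) ⊆ S ∪ T := by
        intro u _
        rcases hF1 (f u) with h | h
        · exact Finset.mem_union_right _ (Finset.mem_filter.mpr ⟨Finset.mem_univ _, h⟩)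
        · exact Finset.mem_union_left _ (Finset.mem_filter.mpr ⟨Finset.mem_univ _, h⟩)
      have h2 := Finset.card_le_card hunion
      have h3 := Finset.card_union_le S T
      rw [Finset.card_univ, ← hkdef] at h2
      omega
    obtain ⟨S', hS'sub, hS'card⟩ := Finset.exists_subset_card_eq hScard
    obtain ⟨v, hv⟩ := nabla_exists_high_deg H i S' hS'card hna1
    -- the neighbours of v inside S'
    set Nv := {w : ↥(S' : Set V) | (SimpleGraph.induce (S' : Set V) H).Adj v w} with hNv
    have hNvcard : nabla H i ≤ Nv.ncard := hv
    -- map into G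
    have hlowS : ∀ u : V, u ∈ S' → gdeg G (f u) ≤ d := by
      intro u hu
      have := hS'sub hu
      rw [hS, Finset.mem_filter] at this
      exact this.2
    set B := f '' (Subtype.val '' Nv) with hB
    have hBcard : nabla H i ≤ B.ncard := by
      rw [hB, Set.ncard_image_of_injective _ hinj,
        Set.ncard_image_of_injective _ Subtype.val_injective]
      exact hNvcard
    have hfv_low : gdeg G (f v.val) ≤ d := hlowS v.val v.property
    have hBsub : B ⊆ {x | G.Adj (f v.val) x} := by
      rintro x ⟨u, ⟨w, hw, rfl⟩, rfl⟩
      exact hmap (hw : H.Adj v.val w.val)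
    have hHisub : ↑HiSet ⊆ {x | G.Adj (f v.val) x} := by
      intro x hx
      rw [Finset.mem_coe, hHiSet, Finset.mem_filter] at hx
      have hne : f v.val ≠ x := by
        intro hEq
        rw [← hEq] at hx
        omega
      exact (adj_of_gdeg_full G x (f v.val) (by rw [hcardFin]; exact hx.2) hne).symm
    have hdisj : Disjoint (↑HiSet : Set (Fin (tildePi H i n).length)) B := by
      rw [Set.disjoint_left]
      rintro x hx ⟨u, ⟨w, hw, rfl⟩, rfl⟩
      rw [Finset.mem_coe, hHiSet, Finset.mem_filter] at hx
      have := hlowS w.val w.property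
      omega
    have hcub : (↑HiSet : Set (Fin (tildePi H i n).length)) ∪ B ⊆ {x | G.Adj (f v.val) x} :=
      Set.union_subset hHisub hBsub
    have hge : a + nabla H i ≤ gdeg G (f v.val) := by
      have h1 : ((↑HiSet : Set (Fin (tildePi H i n).length)) ∪ B).ncard
          ≤ gdeg G (f v.val) := by
        rw [gdeg]
        exact Set.ncard_le_ncard hcub (Set.toFinite _)
      have h2 : ((↑HiSet : Set (Fin (tildePi H i n).length)) ∪ B).ncard
          = HiSet.card + B.ncard := by
        rw [Set.ncard_union_eq hdisj (Set.toFinite _) (Set.toFinite _),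
          Set.ncard_coe_finset]
      calc a + nabla H i ≤ HiSet.card + B.ncard := Nat.add_le_add (le_of_eq hF2.symm) hBcard
        _ = ((↑HiSet : Set (Fin (tildePi H i n).length)) ∪ B).ncard := h2.symm
        _ ≤ gdeg G (f v.val) := h1
    have hcontr : a + nabla H i ≤ d := le_trans hge hfv_low
    omega
  refine ⟨hmain, ?_⟩
  -- the potential number bound
  have hn1 : 1 ≤ n := by omega
  have hSne : {s : ℕ | Even s ∧ ∀ π : List ℕ, π.length = n → π.Pairwise (· ≥ ·) →
      IsGraphic π → s ≤ π.sum → PotentiallyGraphic H π}.Nonempty := by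
    refine ⟨n * (n - 1) + 2, ?_, ?_⟩
    · have h1 := Nat.even_mul_succ_self (n - 1)
      rw [Nat.sub_add_cancel hn1, mul_comm] at h1
      rcases h1 with ⟨c, hc⟩
      exact ⟨c + 1, by omega⟩
    · intro π hlen hsort hgr hsum
      exfalso
      obtain ⟨G, hG⟩ := hgr
      have h1 : π.sum ≤ n * (n - 1) := by
        have h2 : (π : Multiset ℕ).sum = π.sum := by simp
        rw [← h2, ← hG, degMultiset]
        have h3 : ∀ v : Fin π.length, gdeg G v ≤ n - 1 := by
          intro v
          calc gdeg G v ≤ Fintype.card (Fin π.length) - 1 := gdeg_le G v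
            _ = n - 1 := by rw [Fintype.card_fin, hlen]
        calc (Multiset.map (gdeg G) Finset.univ.val).sum
            ≤ (Multiset.map (fun _ => n - 1) Finset.univ.val).sum := by
              apply Multiset.sum_map_le_sum_map
              intro v _
              exact h3 v
          _ = n * (n - 1) := by
              rw [Multiset.map_const', Multiset.sum_replicate, smul_eq_mul]
              congr 1
              rw [← Finset.card_def, Finset.card_univ, Fintype.card_fin, hlen]
      omega
  rw [potentialNumber]
  apply le_csInf hSne
  rintro s ⟨hse, hsp⟩
  have hs2 : 2 ≤ s := by
    by_contra hc
    have hs0 : s = 0 := by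
      rcases hse with ⟨c, hc2⟩
      omega
    subst hs0
    have hpot := hsp (List.replicate n 0) (List.length_replicate (n := n) (a := 0))
      (sorted_ge_replicate n 0) ?_ (Nat.zero_le _)
    · obtain ⟨G, hdeg, f, hinj, hmap⟩ := hpot
      have hadj := hmap huv0
      have h1 : 1 ≤ gdeg G (f u0) := by
        rw [gdeg]
        have : f v0 ∈ {w | G.Adj (f u0) w} := hadj
        have := (Set.ncard_pos (Set.toFinite _)).mpr ⟨_, this⟩
        omega
      have h2 : gdeg G (f u0) ∈ degMultiset G := mem_degMultiset G (f u0)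
      rw [hdeg, Multiset.mem_coe] at h2
      have := List.eq_of_mem_replicate h2
      omega
    · refine ⟨⊥, ?_⟩
      rw [degMultiset]
      have hz : ∀ v : Fin (List.replicate n 0).length, gdeg (⊥ : SimpleGraph _) v = 0 := by
        intro v
        rw [gdeg]
        have hemp : {w | (⊥ : SimpleGraph (Fin (List.replicate n 0).length)).Adj v w} = ∅ := by
          ext w
          simp
        rw [hemp, Set.ncard_empty]
      have h1 := Multiset.map_congr
        (f := gdeg (⊥ : SimpleGraph (Fin (List.replicate n 0).length)))
        (g := fun _ => 0)
        (s := (Finset.univ : Finset (Fin (List.replicate n 0).length)).val)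
        (t := (Finset.univ : Finset (Fin (List.replicate n 0).length)).val) rfl
        (fun x _ => hz x)
      rw [h1, Multiset.map_const', Multiset.coe_replicate]
      congr 1
      rw [← Finset.card_def, Finset.card_univ, Fintype.card_fin, List.length_replicate]
  have hsup : ∀ i ∈ Finset.Icc (_root_.indepNum H + 1) k, (tildePi H i n).sum + 2 ≤ s := by
    intro i hi
    have hii := hi
    rw [Finset.mem_Icc] at hii
    obtain ⟨hi1, hi2⟩ := hii
    have hna1 : 1 ≤ nabla H i := nabla_pos H i hi1 hi2
    have hna2 : nabla H i ≤ i - 1 := nabla_le H i hi2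
    set a := k - i with hadef
    set m := n - k + i with hmdef
    set d := k - i + nabla H i - 1 with hddef
    set r := nabla H i - 1 with hrdef
    have htp : tildePi H i n = tp a m (n - 1) d := rfl
    clear_value a m d r
    have hdar : d = a + r := by omega
    have hm1 : 1 ≤ m := by omega
    have hnam : n = a + m := by omega
    have hm5 : 2 * r + 5 ≤ m := by omega
    have hEvenSum : Even (tildePi H i n).sum := by
      rw [htp]
      rcases Nat.eq_zero_or_pos d with hd0 | hd1
      · have hr0 : r = 0 := by omega
        have heven : Even (a * (n - 1) + m * (a + r)) := by
          rw [parity_link a m n r hnam hm1, hr0]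
          simp
        rw [← hdar] at heven
        rw [tp_even_eq a m (n - 1) d heven, base_sum]
        exact heven
      · exact tp_sum_even a m (n - 1) d hm1 hd1
    by_contra hc
    push_neg at hc
    have hle : s ≤ (tildePi H i n).sum := by
      rcases hse with ⟨c1, hc1⟩
      rcases hEvenSum with ⟨c2, hc2⟩
      omega
    have hpot := hsp (tildePi H i n) (by rw [htp, tp_length a m (n - 1) d hm1]; omega)
      (by rw [htp]; exact tp_sorted a m (n - 1) d (by omega))
      (by rw [htp, hdar]; exact tp_isGraphic a m r n hnam hm5) hle
    exact hmain i hi hpot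
  have hsup2 : (Finset.Icc (_root_.indepNum H + 1) k).sup (fun i => (tildePi H i n).sum) ≤ s - 2 :=
    Finset.sup_le fun i hi => by have := hsup i hi; omega
  omega
end

section
/- (Yin) Let r and t be positive integers. A nonincreasing graphic sequence π = (d_1, …, d_n) is potentially (K_r ∨ K̄_t)-graphic if and only if there is a realization of π containing a copy of K_r ∨ K̄_t such that the vertices of the clique of order r have degrees d_1, …, d_r and the vertices of the independent set of order t have degrees d_{r+1}, …, d_{r+t}. -/
set_option linter.unusedSectionVars false
set_option linter.unusedVariables false
set_option maxHeartbeats 1000000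


open SimpleGraph

open Classical in
noncomputable def nbr {V : Type*} [Fintype V] (G : SimpleGraph V) (v : V) : Finset V :=
  Finset.univ.filter (G.Adj v)
lemma mem_nbr {V : Type*} [Fintype V] {G : SimpleGraph V} {v w : V} :
    w ∈ nbr G v ↔ G.Adj v w := by classical simp [nbr]
lemma gdeg_eq {V : Type*} [Fintype V] (G : SimpleGraph V) (v : V) :
    gdeg G v = (nbr G v).card := by
  classical
  rw [gdeg, Set.ncard_eq_toFinset_card']
  congr 1
  ext w
  simp [mem_nbr]

def Pr {V : Type*} (a b c d : V) : Prop := (a = c ∧ b = d) ∨ (a = d ∧ b = c)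
lemma Pr.symm {V : Type*} {a b c d : V} (h : Pr a b c d) : Pr b a c d :=
  h.elim (fun p => Or.inr ⟨p.2, p.1⟩) (fun p => Or.inl ⟨p.2, p.1⟩)
def switch {V : Type*} (G : SimpleGraph V) (u v w x : V) : SimpleGraph V where
  Adj a b := a ≠ b ∧
    ((G.Adj a b ∧ ¬ Pr a b u x ∧ ¬ Pr a b v w) ∨ Pr a b u w ∨ Pr a b v x)
  symm := ⟨by
    rintro a b ⟨hab, h⟩
    refine ⟨Ne.symm hab, ?_⟩
    rcases h with ⟨h1, h2, h3⟩ | h | h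
    · exact Or.inl ⟨h1.symm, fun c => h2 c.symm, fun c => h3 c.symm⟩
    · exact Or.inr (Or.inl h.symm)
    · exact Or.inr (Or.inr h.symm)⟩
  loopless := ⟨by rintro a ⟨h, -⟩; exact h rfl⟩

section Switchy
variable {V : Type*} [Fintype V] [DecidableEq V] {G : SimpleGraph V} {u v w x : V}
  (huv : u ≠ v) (huw : u ≠ w) (hux : u ≠ x) (hvw : v ≠ w) (hvx : v ≠ x) (hwx : w ≠ x)
  (havw : G.Adj v w) (haux : G.Adj u x) (hnuw : ¬ G.Adj u w) (hnvx : ¬ G.Adj v x)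

include huv huw hux hvw hvx hwx havw haux hnuw hnvx

lemma nbr_switch_u : nbr (switch G u v w x) u = insert w ((nbr G u).erase x) := by
  ext z
  simp only [mem_nbr, Finset.mem_insert, Finset.mem_erase, switch, Pr]
  have hne : ∀ a b : V, G.Adj a b → a ≠ b := fun a b h => G.ne_of_adj h
  aesop

lemma nbr_switch_v : nbr (switch G u v w x) v = insert x ((nbr G v).erase w) := by
  ext z
  simp only [mem_nbr, Finset.mem_insert, Finset.mem_erase, switch, Pr]
  have hne : ∀ a b : V, G.Adj a b → a ≠ b := fun a b h => G.ne_of_adj h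
  aesop

lemma nbr_switch_w : nbr (switch G u v w x) w = insert u ((nbr G w).erase v) := by
  ext z
  simp only [mem_nbr, Finset.mem_insert, Finset.mem_erase, switch, Pr]
  have hne : ∀ a b : V, G.Adj a b → a ≠ b := fun a b h => G.ne_of_adj h
  have hsym : ∀ a b : V, G.Adj a b → G.Adj b a := fun a b h => G.symm.symm _ _ h
  aesop

lemma nbr_switch_x : nbr (switch G u v w x) x = insert v ((nbr G x).erase u) := by
  ext z
  simp only [mem_nbr, Finset.mem_insert, Finset.mem_erase, switch, Pr]
  have hne : ∀ a b : V, G.Adj a b → a ≠ b := fun a b h => G.ne_of_adj h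
  have hsym : ∀ a b : V, G.Adj a b → G.Adj b a := fun a b h => G.symm.symm _ _ h
  aesop

lemma nbr_switch_other {z : V} (hzu : z ≠ u) (hzv : z ≠ v) (hzw : z ≠ w) (hzx : z ≠ x) :
    nbr (switch G u v w x) z = nbr G z := by
  ext y
  simp only [mem_nbr, switch, Pr]
  have hne : ∀ a b : V, G.Adj a b → a ≠ b := fun a b h => G.ne_of_adj h
  aesop

lemma switch_adj_of {a b : V} (hadj : G.Adj a b)
    (h1 : a = u → (G.Adj v b ∨ b = v)) (h2 : b = u → (G.Adj v a ∨ a = v))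
    (h3 : a = v → b ≠ w) (h4 : b = v → a ≠ w) :
    (switch G u v w x).Adj a b := by
  have hne : ∀ a b : V, G.Adj a b → a ≠ b := fun a b h => G.ne_of_adj h
  have hsym : ∀ a b : V, G.Adj a b → G.Adj b a := fun a b h => G.symm.symm _ _ h
  refine ⟨hne a b hadj, Or.inl ⟨hadj, ?_, ?_⟩⟩ <;> unfold Pr <;> aesop

lemma gdeg_switch (y : V) : gdeg (switch G u v w x) y = gdeg G y := by
  by_cases hyu : y = u
  · subst hyu
    rw [gdeg_eq, gdeg_eq, nbr_switch_u huv huw hux hvw hvx hwx havw haux hnuw hnvx,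
      Finset.card_insert_of_notMem (by simp only [Finset.mem_erase, mem_nbr]; tauto),
      Finset.card_erase_of_mem (mem_nbr.2 haux)]
    have : 0 < (nbr G y).card := Finset.card_pos.2 ⟨x, mem_nbr.2 haux⟩
    omega
  by_cases hyv : y = v
  · subst hyv
    rw [gdeg_eq, gdeg_eq, nbr_switch_v huv huw hux hvw hvx hwx havw haux hnuw hnvx,
      Finset.card_insert_of_notMem (by simp only [Finset.mem_erase, mem_nbr]; tauto),
      Finset.card_erase_of_mem (mem_nbr.2 havw)]
    have : 0 < (nbr G y).card := Finset.card_pos.2 ⟨w, mem_nbr.2 havw⟩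
    omega
  by_cases hyw : y = w
  · subst hyw
    have h1 : G.Adj y v := havw.symm
    have h2 : ¬ G.Adj y u := fun h => hnuw h.symm
    rw [gdeg_eq, gdeg_eq, nbr_switch_w huv huw hux hvw hvx hwx havw haux hnuw hnvx,
      Finset.card_insert_of_notMem (by simp only [Finset.mem_erase, mem_nbr]; tauto),
      Finset.card_erase_of_mem (mem_nbr.2 h1)]
    have : 0 < (nbr G y).card := Finset.card_pos.2 ⟨v, mem_nbr.2 h1⟩
    omega
  by_cases hyx : y = x
  · subst hyx
    have h1 : G.Adj y u := haux.symm
    have h2 : ¬ G.Adj y v := fun h => hnvx h.symm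
    rw [gdeg_eq, gdeg_eq, nbr_switch_x huv huw hux hvw hvx hwx havw haux hnuw hnvx,
      Finset.card_insert_of_notMem (by simp only [Finset.mem_erase, mem_nbr]; tauto),
      Finset.card_erase_of_mem (mem_nbr.2 h1)]
    have : 0 < (nbr G y).card := Finset.card_pos.2 ⟨u, mem_nbr.2 h1⟩
    omega
  · rw [gdeg_eq, gdeg_eq, nbr_switch_other huv huw hux hvw hvx hwx havw haux hnuw hnvx
      hyu hyv hyw hyx]

omit huv huw hux hvw hvx hwx havw haux hnuw hnvx in
lemma erase_card_le (h : gdeg G v ≤ gdeg G u) :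
    ((nbr G v \ nbr G u).erase u).card ≤ ((nbr G u \ nbr G v).erase v).card := by
  have hA := Finset.card_sdiff_add_card_inter (nbr G v) (nbr G u)
  have hB := Finset.card_sdiff_add_card_inter (nbr G u) (nbr G v)
  have hI : (nbr G v ∩ nbr G u).card = (nbr G u ∩ nbr G v).card := by
    rw [Finset.inter_comm]
  rw [gdeg_eq, gdeg_eq] at h
  by_cases hadj : G.Adj u v
  · have hu : u ∈ nbr G v \ nbr G u :=
      Finset.mem_sdiff.2 ⟨mem_nbr.2 hadj.symm, fun hc => G.loopless.irrefl u (mem_nbr.1 hc)⟩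
    have hv : v ∈ nbr G u \ nbr G v :=
      Finset.mem_sdiff.2 ⟨mem_nbr.2 hadj, fun hc => G.loopless.irrefl v (mem_nbr.1 hc)⟩
    rw [Finset.card_erase_of_mem hu, Finset.card_erase_of_mem hv]
    have h1 : 0 < (nbr G v \ nbr G u).card := Finset.card_pos.2 ⟨u, hu⟩
    omega
  · rw [Finset.erase_eq_of_notMem (fun hc => hadj (mem_nbr.1 (Finset.mem_sdiff.1 hc).1).symm),
      Finset.erase_eq_of_notMem (fun hc => hadj (mem_nbr.1 (Finset.mem_sdiff.1 hc).1))]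
    omega

omit huv huw hux hvw hvx hwx havw haux hnuw hnvx in
lemma switchMany : ∀ (n : ℕ) (G : SimpleGraph V) (u v : V) (T : Finset V),
    u ≠ v → u ∉ T → v ∉ T →
    (∀ w ∈ T, G.Adj v w ∨ G.Adj u w) →
    (T \ (nbr G u ∩ nbr G v)).card ≤ ((nbr G v \ nbr G u).erase u).card →
    gdeg G v ≤ gdeg G u →
    (T \ nbr G u).card = n →
    ∃ G' : SimpleGraph V, (∀ y, gdeg G' y = gdeg G y) ∧ (∀ w ∈ T, G'.Adj u w) ∧
      (∀ a b : V, G.Adj a b → (a = u → (G.Adj v b ∨ b = v)) → (b = u → (G.Adj v a ∨ a = v)) →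
        (a = v → b ∉ T) → (b = v → a ∉ T) → G'.Adj a b) := by
  intro n
  induction n with
  | zero =>
    intro G u v T huv huT hvT hcov hcard hdeg hfil
    refine ⟨G, fun y => rfl, fun w hw => ?_, fun a b h _ _ _ _ => h⟩
    rw [Finset.card_eq_zero, Finset.sdiff_eq_empty_iff_subset] at hfil
    exact mem_nbr.1 (hfil hw)
  | succ n ih =>
    intro G u v T huv huT hvT hcov hcard hdeg hfil
    -- pick w ∈ T with ¬ G.Adj u w
    obtain ⟨w, hwmem⟩ : (T \ nbr G u).Nonempty := Finset.card_pos.1 (by omega)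
    obtain ⟨hwT, hwnu⟩ := Finset.mem_sdiff.1 hwmem
    have hnuw : ¬ G.Adj u w := fun hc => hwnu (mem_nbr.2 hc)
    have havw : G.Adj v w := (hcov w hwT).resolve_right hnuw
    -- pick x ∈ (nbr G u \ nbr G v).erase v, x ∉ T
    have hsub1 : T ∩ ((nbr G u \ nbr G v).erase v) ⊆ (T \ (nbr G u ∩ nbr G v)).erase w := by
      intro z hz
      obtain ⟨hzT, hz2⟩ := Finset.mem_inter.1 hz
      obtain ⟨hzv, hz3⟩ := Finset.mem_erase.1 hz2
      obtain ⟨hzu, hznv⟩ := Finset.mem_sdiff.1 hz3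
      refine Finset.mem_erase.2 ⟨?_, Finset.mem_sdiff.2 ⟨hzT, ?_⟩⟩
      · rintro rfl; exact hnuw (mem_nbr.1 hzu)
      · intro hc; exact hznv (Finset.mem_inter.1 hc).2
    have hw_in : w ∈ (T \ (nbr G u ∩ nbr G v)) :=
      Finset.mem_sdiff.2 ⟨hwT, fun hc => hnuw (mem_nbr.1 (Finset.mem_inter.1 hc).1)⟩
    have hkey : (((nbr G u \ nbr G v).erase v) \ T).Nonempty := by
      rw [← Finset.card_pos]
      have e1 := Finset.card_sdiff_add_card_inter ((nbr G u \ nbr G v).erase v) T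
      have e2 : (T ∩ ((nbr G u \ nbr G v).erase v)).card ≤
          ((T \ (nbr G u ∩ nbr G v)).erase w).card := Finset.card_le_card hsub1
      have e3 : ((T \ (nbr G u ∩ nbr G v)).erase w).card =
          (T \ (nbr G u ∩ nbr G v)).card - 1 := Finset.card_erase_of_mem hw_in
      have e4 : 0 < (T \ (nbr G u ∩ nbr G v)).card := Finset.card_pos.2 ⟨w, hw_in⟩
      have e5 := erase_card_le (G := G) (u := u) (v := v) hdeg
      have e6 : (((nbr G u \ nbr G v).erase v) ∩ T).card =
          (T ∩ ((nbr G u \ nbr G v).erase v)).card := by rw [Finset.inter_comm]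
      omega
    obtain ⟨x, hx⟩ := hkey
    obtain ⟨hx1, hxT⟩ := Finset.mem_sdiff.1 hx
    obtain ⟨hxv, hx2⟩ := Finset.mem_erase.1 hx1
    obtain ⟨hxu, hxnv⟩ := Finset.mem_sdiff.1 hx2
    have haux : G.Adj u x := mem_nbr.1 hxu
    have hnvx : ¬ G.Adj v x := fun hc => hxnv (mem_nbr.2 hc)
    -- distinctness
    have huw : u ≠ w := fun hc => huT (hc ▸ hwT)
    have hvw : v ≠ w := G.ne_of_adj havw
    have hux : u ≠ x := G.ne_of_adj haux
    have hvx : v ≠ x := fun hc => hxv hc.symm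
    have hwx : w ≠ x := fun hc => hnvx (hc ▸ havw)
    set G₁ := switch G u v w x with hG₁
    have hdegs : ∀ y, gdeg G₁ y = gdeg G y :=
      fun y => gdeg_switch huv huw hux hvw hvx hwx havw haux hnuw hnvx y
    have hNu : nbr G₁ u = insert w ((nbr G u).erase x) :=
      nbr_switch_u huv huw hux hvw hvx hwx havw haux hnuw hnvx
    have hNv : nbr G₁ v = insert x ((nbr G v).erase w) :=
      nbr_switch_v huv huw hux hvw hvx hwx havw haux hnuw hnvx
    -- invariant: coverage
    have hcov1 : ∀ z ∈ T, G₁.Adj v z ∨ G₁.Adj u z := by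
      intro z hzT
      have hzx : z ≠ x := fun hc => hxT (hc ▸ hzT)
      by_cases hzw : z = w
      · subst hzw
        right
        rw [← mem_nbr, hNu]
        exact Finset.mem_insert_self _ _
      · rcases hcov z hzT with h | h
        · left
          rw [← mem_nbr, hNv]
          exact Finset.mem_insert_of_mem (Finset.mem_erase.2 ⟨hzw, mem_nbr.2 h⟩)
        · right
          rw [← mem_nbr, hNu]
          exact Finset.mem_insert_of_mem (Finset.mem_erase.2 ⟨hzx, mem_nbr.2 h⟩)
    -- invariant: card
    have hE1 : T \ (nbr G₁ u ∩ nbr G₁ v) = T \ (nbr G u ∩ nbr G v) := by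
      ext z
      simp only [Finset.mem_sdiff, Finset.mem_inter, hNu, hNv, Finset.mem_insert,
        Finset.mem_erase, mem_nbr]
      constructor
      · rintro ⟨hzT, hz⟩
        have hzx : z ≠ x := fun hc => hxT (hc ▸ hzT)
        refine ⟨hzT, fun hc => hz ?_⟩
        have hzw : z ≠ w := fun hc2 => hnuw (hc2 ▸ hc.1)
        exact ⟨Or.inr ⟨hzx, hc.1⟩, Or.inr ⟨hzw, hc.2⟩⟩
      · rintro ⟨hzT, hz⟩
        have hzx : z ≠ x := fun hc => hxT (hc ▸ hzT)
        refine ⟨hzT, fun hc => ?_⟩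
        rcases hc with ⟨rfl | ⟨h1, h1'⟩, h2 | ⟨h2, h2'⟩⟩
        · exact hzx h2
        · exact h2 rfl
        · exact hzx h2
        · exact hz ⟨h1', h2'⟩
    have hE2 : (nbr G₁ v \ nbr G₁ u).erase u =
        insert x (((nbr G v \ nbr G u).erase u).erase w) := by
      ext z
      simp only [hNu, hNv, Finset.mem_erase, Finset.mem_sdiff, Finset.mem_insert,
        mem_nbr]
      constructor
      · rintro ⟨hzu, hz1 | ⟨hzw, hz1⟩, hz2⟩
        · exact Or.inl hz1
        · refine Or.inr ⟨hzw, hzu, hz1, fun hc => hz2 (Or.inr ⟨?_, hc⟩)⟩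
          rintro rfl; exact hnvx hz1
      · rintro (rfl | ⟨hzw, hzu, hz1, hz2⟩)
        · refine ⟨fun hc => hux hc.symm, Or.inl rfl, ?_⟩
          rintro (rfl | ⟨hc, -⟩)
          · exact hwx rfl
          · exact hc rfl
        · refine ⟨hzu, Or.inr ⟨hzw, hz1⟩, ?_⟩
          rintro (rfl | ⟨-, hc⟩)
          · exact hzw rfl
          · exact hz2 hc
    have hcard1 : (T \ (nbr G₁ u ∩ nbr G₁ v)).card ≤ ((nbr G₁ v \ nbr G₁ u).erase u).card := by
      rw [hE1, hE2]
      have hwmem2 : w ∈ (nbr G v \ nbr G u).erase u :=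
        Finset.mem_erase.2 ⟨fun hc => huw hc.symm,
          Finset.mem_sdiff.2 ⟨mem_nbr.2 havw, fun hc => hnuw (mem_nbr.1 hc)⟩⟩
      have hxnot : x ∉ ((nbr G v \ nbr G u).erase u).erase w := by
        simp only [Finset.mem_erase, Finset.mem_sdiff, mem_nbr]
        rintro ⟨-, -, hc, -⟩
        exact hnvx hc
      rw [Finset.card_insert_of_notMem hxnot, Finset.card_erase_of_mem hwmem2]
      have : 0 < ((nbr G v \ nbr G u).erase u).card := Finset.card_pos.2 ⟨w, hwmem2⟩
      omega
    -- measure decreases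
    have hmeas : T \ nbr G₁ u = (T \ nbr G u).erase w := by
      ext z
      simp only [hNu, Finset.mem_sdiff, Finset.mem_erase, Finset.mem_insert, mem_nbr]
      constructor
      · rintro ⟨hzT, hz⟩
        have hzw : z ≠ w := fun hc => hz (Or.inl hc)
        have hzx : z ≠ x := fun hc => hxT (hc ▸ hzT)
        exact ⟨hzw, hzT, fun hc => hz (Or.inr ⟨hzx, hc⟩)⟩
      · rintro ⟨hzw, hzT, hz⟩
        refine ⟨hzT, ?_⟩
        rintro (rfl | ⟨-, hc⟩)
        · exact hzw rfl
        · exact hz hc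
    have hmeascard : (T \ nbr G₁ u).card = n := by
      rw [hmeas, Finset.card_erase_of_mem hwmem, hfil]
      omega
    obtain ⟨G', hG'deg, hG'T, hG'pres⟩ := ih G₁ u v T huv huT hvT hcov1 hcard1
      (by rw [hdegs, hdegs]; exact hdeg) hmeascard
    refine ⟨G', fun y => (hG'deg y).trans (hdegs y), hG'T, ?_⟩
    intro a b hab c1 c2 c3 c4
    have hbw : a = u → b ≠ w := by rintro rfl rfl; exact hnuw hab
    have haw : b = u → a ≠ w := by rintro rfl rfl; exact hnuw hab.symm
    have hab1 : G₁.Adj a b := by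
      apply switch_adj_of huv huw hux hvw hvx hwx havw haux hnuw hnvx hab c1 c2
      · intro ha; exact fun hc => c3 ha (hc ▸ hwT)
      · intro hb; exact fun hc => c4 hb (hc ▸ hwT)
    apply hG'pres a b hab1
    · intro ha
      rcases c1 ha with h | h
      · left
        rw [← mem_nbr, hNv]
        exact Finset.mem_insert_of_mem (Finset.mem_erase.2 ⟨hbw ha, mem_nbr.2 h⟩)
      · exact Or.inr h
    · intro hb
      rcases c2 hb with h | h
      · left
        rw [← mem_nbr, hNv]
        exact Finset.mem_insert_of_mem (Finset.mem_erase.2 ⟨haw hb, mem_nbr.2 h⟩)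
      · exact Or.inr h
    · exact c3
    · exact c4

omit huv huw hux hvw hvx hwx havw haux hnuw hnvx in
lemma swapStep (G : SimpleGraph V) (u v : V) (T : Finset V) (huv : u ≠ v) (huT : u ∉ T)
    (hvT : v ∉ T) (hTv : ∀ w ∈ T, G.Adj v w) (hdeg : gdeg G v ≤ gdeg G u) :
    ∃ G' : SimpleGraph V, (∀ y, gdeg G' y = gdeg G y) ∧ (∀ w ∈ T, G'.Adj u w) ∧
      (∀ a b : V, G.Adj a b → (a = u → (G.Adj v b ∨ b = v)) → (b = u → (G.Adj v a ∨ a = v)) →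
        (a = v → b ∉ T) → (b = v → a ∉ T) → G'.Adj a b) := by
  apply switchMany (T \ nbr G u).card G u v T huv huT hvT
    (fun w hw => Or.inl (hTv w hw)) ?_ hdeg rfl
  apply Finset.card_le_card
  intro z hz
  obtain ⟨hzT, hz2⟩ := Finset.mem_sdiff.1 hz
  refine Finset.mem_erase.2 ⟨fun hc => huT (hc ▸ hzT), Finset.mem_sdiff.2
    ⟨mem_nbr.2 (hTv z hzT), fun hc => hz2 (Finset.mem_inter.2
      ⟨hc, mem_nbr.2 (hTv z hzT)⟩)⟩⟩

omit huv huw hux hvw hvx hwx havw haux hnuw hnvx in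
lemma sortCopy (r t : ℕ) (π : List ℕ) (hπ : π.Pairwise (· ≥ ·)) (hrt : r + t ≤ π.length) :
    ∀ (k : ℕ) (G : SimpleGraph (Fin π.length)) (f : Fin (r+t) → Fin π.length),
    (∀ i, gdeg G i = π.get i) → Function.Injective f →
    (∀ i j : Fin (r+t), i ≠ j → i.val < r → G.Adj (f i) (f j)) →
    (∀ j : Fin (r+t), j.val < r + t - k → (f j).val = j.val) →
    ∃ G' : SimpleGraph (Fin π.length), (∀ i, gdeg G' i = π.get i) ∧
      (∀ i j : Fin (r+t), i ≠ j → i.val < r →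
        G'.Adj (Fin.castLE hrt i) (Fin.castLE hrt j)) := by
  have hmono : ∀ a b : Fin π.length, a.val ≤ b.val → π.get b ≤ π.get a := by
    intro a b h
    rcases eq_or_lt_of_le h with h | h
    · exact le_of_eq (congrArg π.get (Fin.ext h.symm))
    · exact List.pairwise_iff_get.1 hπ a b h
  intro k
  induction k with
  | zero =>
    intro G f hdG hinj hP hs
    refine ⟨G, hdG, fun i j hij hir => ?_⟩
    have h1 : f i = Fin.castLE hrt i := Fin.ext (hs i (by omega))
    have h2 : f j = Fin.castLE hrt j := Fin.ext (hs j (by omega))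
    rw [← h1, ← h2]
    exact hP i j hij hir
  | succ k ih =>
    intro G f hdG hinj hP hs
    by_cases hk : r + t ≤ k
    · exact ih G f hdG hinj hP (fun j hj => absurd hj (by omega))
    push_neg at hk
    set m : ℕ := r + t - (k+1) with hm
    have hmlt : m < r + t := by omega
    set i₀ : Fin (r+t) := ⟨m, hmlt⟩ with hi₀
    have hi₀v : i₀.val = m := rfl
    by_cases heq : (f i₀).val = m
    · refine ih G f hdG hinj hP (fun j hj => ?_)
      rcases Nat.lt_or_ge j.val m with h | h
      · exact hs j (by omega)
      · have hji : j = i₀ := Fin.ext (by omega)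
        rw [hji, heq, hi₀v]
    · -- f i₀ misplaced
      have hge : m < (f i₀).val := by
        rcases Nat.lt_or_ge (f i₀).val m with h | h
        · exfalso
          set j : Fin (r+t) := ⟨(f i₀).val, by omega⟩ with hj
          have hjval : j.val = (f i₀).val := rfl
          have h1 : (f j).val = j.val := hs j (by omega)
          have h2 : j = i₀ := hinj (Fin.ext (by omega))
          have h3 := congrArg Fin.val h2
          omega
        · omega
      set v : Fin π.length := f i₀ with hv
      set u : Fin π.length := ⟨m, by omega⟩ with hu
      have huval : u.val = m := rfl
      have hvval : v.val = (f i₀).val := rfl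
      have huvne : u ≠ v := fun hc => by
        have h := congrArg Fin.val hc
        omega
      have hdeg : gdeg G v ≤ gdeg G u := by
        rw [hdG, hdG]; exact hmono u v (by omega)
      have hsucc : ∀ (G' : SimpleGraph (Fin π.length)) (f' : Fin (r+t) → Fin π.length),
          (∀ i, gdeg G' i = π.get i) → Function.Injective f' →
          (∀ i j : Fin (r+t), i ≠ j → i.val < r → G'.Adj (f' i) (f' j)) →
          (∀ j : Fin (r+t), j.val < m → f' j = f j) → f' i₀ = u →
          ∃ G'' : SimpleGraph (Fin π.length), (∀ i, gdeg G'' i = π.get i) ∧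
            (∀ i j : Fin (r+t), i ≠ j → i.val < r →
              G''.Adj (Fin.castLE hrt i) (Fin.castLE hrt j)) := by
        intro G' f' h1 h2 h3 h4 h5
        refine ih G' f' h1 h2 h3 (fun j hj => ?_)
        rcases Nat.lt_or_ge j.val m with h | h
        · rw [h4 j h]; exact hs j (by omega)
        · have hji : j = i₀ := Fin.ext (by omega)
          rw [hji, h5]
      by_cases hur : ∃ k₀ : Fin (r+t), f k₀ = u
      · -- u is in the range of f
        obtain ⟨k₀, hk₀⟩ := hur
        have hk₀ne : k₀ ≠ i₀ := fun hc => huvne (hc ▸ hk₀).symm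
        have hk₀gt : m < k₀.val := by
          rcases Nat.lt_or_ge k₀.val m with h | h
          · exfalso
            have h1 := hs k₀ (by omega)
            rw [hk₀] at h1
            omega
          · rcases Nat.lt_or_ge m k₀.val with h2 | h2
            · exact h2
            · exact absurd (Fin.ext (by omega : k₀.val = i₀.val)) hk₀ne
        set σ : Equiv.Perm (Fin (r+t)) := Equiv.swap i₀ k₀ with hσ
        set f' : Fin (r+t) → Fin π.length := f ∘ σ with hf'
        have hf'inj : Function.Injective f' := hinj.comp σ.injective
        have hf'i₀ : f' i₀ = u := by simp [hf', hσ, Equiv.swap_apply_left, hk₀]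
        have hf'k₀ : f' k₀ = v := by simp [hf', hσ, Equiv.swap_apply_right, hv]
        have hf'other : ∀ j : Fin (r+t), j ≠ i₀ → j ≠ k₀ → f' j = f j := by
          intro j h1 h2; simp [hf', hσ, Equiv.swap_apply_of_ne_of_ne h1 h2]
        have hf'low : ∀ j : Fin (r+t), j.val < m → f' j = f j := by
          intro j hj
          exact hf'other j (fun hc => by rw [hc] at hj; omega)
            (fun hc => by rw [hc] at hj; omega)
        by_cases hcase : i₀.val < r ∧ r ≤ k₀.val
        · -- surgery case
          obtain ⟨hir, hkr⟩ := hcase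
          set T : Finset (Fin π.length) :=
            (Finset.univ.filter (fun j : Fin (r+t) => r ≤ j.val ∧ j ≠ k₀)).image f with hT
          have hmemT : ∀ z, z ∈ T ↔ ∃ j : Fin (r+t), r ≤ j.val ∧ j ≠ k₀ ∧ f j = z := by
            intro z
            simp only [hT, Finset.mem_image, Finset.mem_filter, Finset.mem_univ, true_and]
            constructor
            · rintro ⟨j, ⟨h1, h2⟩, h3⟩; exact ⟨j, h1, h2, h3⟩
            · rintro ⟨j, h1, h2, h3⟩; exact ⟨j, ⟨h1, h2⟩, h3⟩
          have huT : u ∉ T := by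
            rw [hmemT]
            rintro ⟨j, h1, h2, h3⟩
            exact h2 (hinj (h3.trans hk₀.symm))
          have hvT : v ∉ T := by
            rw [hmemT]
            rintro ⟨j, h1, h2, h3⟩
            have h4 := congrArg Fin.val (hinj (h3 : f j = f i₀))
            omega
          have hTv : ∀ w ∈ T, G.Adj v w := by
            intro w hw
            rw [hmemT] at hw
            obtain ⟨j, h1, h2, h3⟩ := hw
            rw [← h3]
            exact hP i₀ j (fun hc => by rw [← hc] at h1; omega) hir
          obtain ⟨G', hG'deg, hG'T, hpres⟩ := swapStep G u v T huvne huT hvT hTv hdeg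
          have hnotT : ∀ p : Fin (r+t), p.val < r → f p ∉ T := by
            intro p hp
            rw [hmemT]
            rintro ⟨j, h1, h2, h3⟩
            have h4 := congrArg Fin.val (hinj h3)
            omega
          have hfu : ∀ p : Fin (r+t), f p = u → p = k₀ :=
            fun p hp => hinj (hp.trans hk₀.symm)
          have hfv : ∀ p : Fin (r+t), f p = v → p = i₀ := fun p hp => hinj hp
          refine hsucc G' f' (fun i => (hG'deg i).trans (hdG i)) hf'inj ?_ hf'low hf'i₀
          intro p q hpq hpr
          by_cases hpi : p = i₀
          · subst hpi
            rw [hf'i₀]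
            by_cases hqk : q = k₀
            · rw [hqk, hf'k₀]
              refine hpres u v (by rw [← hk₀, hv]; exact (hP i₀ k₀ (Ne.symm hk₀ne) hir).symm)
                (fun _ => Or.inr rfl) (fun hc => Or.inr hc.symm)
                (fun _ => hvT) (fun _ => huT)
            · have hq' : f' q = f q := hf'other q (Ne.symm hpq) hqk
              rw [hq']
              rcases Nat.lt_or_ge q.val r with hqr | hqr
              · refine hpres u (f q) ?_ ?_ ?_ ?_ ?_
                · rw [← hk₀]
                  exact (hP q k₀ hqk hqr).symm
                · intro _
                  left
                  exact hP i₀ q hpq hir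
                · intro hc
                  exact absurd (hfu q hc) hqk
                · intro hc
                  exact (huvne hc).elim
                · intro hc
                  exact absurd (hfv q hc) (Ne.symm hpq)
              · exact hG'T (f q) ((hmemT (f q)).2 ⟨q, hqr, hqk, rfl⟩)
          · by_cases hpk : p = k₀
            · exact absurd hpr (by rw [hpk]; omega)
            · have hp' : f' p = f p := hf'other p hpi hpk
              rw [hp']
              by_cases hqi : q = i₀
              · subst hqi
                rw [hf'i₀]
                refine hpres (f p) u (by rw [← hk₀]; exact hP p k₀ hpk hpr) ?_ ?_ ?_ ?_
                · intro hc; exact absurd (hfu p hc) hpk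
                · intro _
                  left
                  exact hP i₀ p (Ne.symm hpq) hir
                · intro hc; exact absurd (hfv p hc) hpi
                · intro hc; exact (huvne hc).elim
              · by_cases hqk : q = k₀
                · subst hqk
                  rw [hf'k₀]
                  refine hpres (f p) v (by rw [hv]; exact hP p i₀ hpi hpr) ?_ ?_ ?_ ?_
                  · intro hc; exact absurd (hfu p hc) hpk
                  · intro hc; exact (huvne hc.symm).elim
                  · intro hc; exact absurd (hfv p hc) hpi
                  · intro _; exact hnotT p hpr
                · have hq' : f' q = f q := hf'other q hqi hqk
                  rw [hq']
                  refine hpres (f p) (f q) (hP p q hpq hpr) ?_ ?_ ?_ ?_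
                  · intro hc; exact absurd (hfu p hc) hpk
                  · intro hc; exact absurd (hfu q hc) hqk
                  · intro hc; exact absurd (hfv p hc) hpi
                  · intro hc; exact absurd (hfv q hc) hqi
        · -- pure relabel case
          have hσr : ∀ p : Fin (r+t), p.val < r → (σ p).val < r := by
            intro p hp
            rcases Nat.lt_or_ge k₀.val r with h | h
            · by_cases h1 : p = i₀
              · have hsp : σ p = k₀ := by rw [h1, hσ]; exact Equiv.swap_apply_left _ _
                rw [hsp]; exact h
              · by_cases h2 : p = k₀
                · have hsp : σ p = i₀ := by rw [h2, hσ]; exact Equiv.swap_apply_right _ _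
                  rw [hsp]; omega
                · rw [hσ, Equiv.swap_apply_of_ne_of_ne h1 h2]; exact hp
            · have h3 : r ≤ i₀.val := by
                by_contra hc
                push_neg at hc
                exact hcase ⟨hc, h⟩
              have h1 : p ≠ i₀ := fun hc => by rw [hc] at hp; omega
              have h2 : p ≠ k₀ := fun hc => by rw [hc] at hp; omega
              rw [hσ, Equiv.swap_apply_of_ne_of_ne h1 h2]; exact hp
          refine hsucc G f' hdG hf'inj ?_ hf'low hf'i₀
          intro p q hpq hpr
          have hne : (σ p) ≠ (σ q) := fun hc => hpq (σ.injective hc)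
          exact hP (σ p) (σ q) hne (hσr p hpr)
      · -- u not in range of f
        push_neg at hur
        set f' : Fin (r+t) → Fin π.length := Function.update f i₀ u with hf'
        have hf'i₀ : f' i₀ = u := by rw [hf']; exact Function.update_self _ _ _
        have hf'other : ∀ j : Fin (r+t), j ≠ i₀ → f' j = f j := by
          intro j hj
          rw [hf']
          exact Function.update_of_ne hj _ _
        have hf'inj : Function.Injective f' := by
          intro a b hab
          by_cases ha : a = i₀ <;> by_cases hb : b = i₀
          · rw [ha, hb]
          · rw [ha, hf'i₀, hf'other b hb] at hab
            exact absurd hab.symm (hur b)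
          · rw [hb, hf'i₀, hf'other a ha] at hab
            exact absurd hab (hur a)
          · rw [hf'other a ha, hf'other b hb] at hab
            exact hinj hab
        have hf'low : ∀ j : Fin (r+t), j.val < m → f' j = f j :=
          fun j hj => hf'other j (fun hc => by rw [hc] at hj; omega)
        set T : Finset (Fin π.length) :=
          (Finset.univ.filter
            (fun j : Fin (r+t) => j ≠ i₀ ∧ (i₀.val < r ∨ j.val < r))).image f with hT
        have hmemT : ∀ z, z ∈ T ↔
            ∃ j : Fin (r+t), j ≠ i₀ ∧ (i₀.val < r ∨ j.val < r) ∧ f j = z := by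
          intro z
          simp only [hT, Finset.mem_image, Finset.mem_filter, Finset.mem_univ, true_and]
          constructor
          · rintro ⟨j, ⟨h1, h2⟩, h3⟩; exact ⟨j, h1, h2, h3⟩
          · rintro ⟨j, h1, h2, h3⟩; exact ⟨j, ⟨h1, h2⟩, h3⟩
        have huT : u ∉ T := by
          rw [hmemT]
          rintro ⟨j, h1, h2, h3⟩
          exact hur j h3
        have hvT : v ∉ T := by
          rw [hmemT]
          rintro ⟨j, h1, h2, h3⟩
          rw [hv] at h3
          exact h1 (hinj h3)
        have hTv : ∀ w ∈ T, G.Adj v w := by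
          intro w hw
          rw [hmemT] at hw
          obtain ⟨j, h1, h2, h3⟩ := hw
          rw [← h3, hv]
          rcases h2 with h2 | h2
          · exact hP i₀ j (Ne.symm h1) h2
          · exact (hP j i₀ h1 h2).symm
        obtain ⟨G', hG'deg, hG'T, hpres⟩ := swapStep G u v T huvne huT hvT hTv hdeg
        refine hsucc G' f' (fun i => (hG'deg i).trans (hdG i)) hf'inj ?_ hf'low hf'i₀
        intro p q hpq hpr
        by_cases hpi : p = i₀
        · have hqi : q ≠ i₀ := fun hc => hpq (hpi.trans hc.symm)
          rw [hpi, hf'i₀, hf'other q hqi]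
          exact hG'T (f q) ((hmemT (f q)).2 ⟨q, hqi, Or.inl (by rw [← hpi]; exact hpr), rfl⟩)
        · rw [hf'other p hpi]
          by_cases hqi : q = i₀
          · rw [hqi, hf'i₀]
            exact (hG'T (f p) ((hmemT (f p)).2 ⟨p, hpi, Or.inr hpr, rfl⟩)).symm
          · rw [hf'other q hqi]
            refine hpres (f p) (f q) (hP p q hpq hpr) ?_ ?_ ?_ ?_
            · intro hc; exact (hur p hc).elim
            · intro hc; exact (hur q hc).elim
            · intro hc; rw [hv] at hc; exact absurd (hinj hc) hpi
            · intro hc; rw [hv] at hc; exact absurd (hinj hc) hqi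

end Switchy

lemma gdeg_comap {V : Type*} [Fintype V] (G : SimpleGraph V) (e : Equiv.Perm V) (i : V) :
    gdeg (SimpleGraph.comap (⇑e) G) i = gdeg G (e i) := by
  have h1 : {w | (SimpleGraph.comap (⇑e) G).Adj i w} = ⇑e ⁻¹' {w | G.Adj (e i) w} := rfl
  rw [gdeg, h1, ← Equiv.image_symm_eq_preimage]
  rw [Set.ncard_image_of_injective _ e.symm.injective, gdeg]

lemma relabel (π : List ℕ) (hπ : π.Pairwise (· ≥ ·)) (G : SimpleGraph (Fin π.length))
    (hdeg : degMultiset G = (π : Multiset ℕ)) :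
    ∃ (G' : SimpleGraph (Fin π.length)) (e : Equiv.Perm (Fin π.length)),
      (∀ i, gdeg G' i = π.get i) ∧ (∀ a b, G'.Adj a b ↔ G.Adj (e a) (e b)) := by
  set d : Fin π.length → ℕ := gdeg G with hd
  set e : Equiv.Perm (Fin π.length) := Fin.revPerm.trans (Tuple.sort d) with he
  have hmono : ∀ a b : Fin π.length, a ≤ b → d (e b) ≤ d (e a) := by
    intro a b hab
    have h1 : Fin.rev b ≤ Fin.rev a := Fin.rev_le_rev.2 hab
    exact Tuple.monotone_sort d h1
  have hperm : (List.ofFn (fun i => d (e i))).Perm π := by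
    rw [← Multiset.coe_eq_coe, ← Fin.univ_val_map, ← hdeg, degMultiset]
    have h2 : Finset.univ.val.map (fun i => d (e i)) =
        (Finset.univ.val.map (⇑e)).map d := by
      rw [Multiset.map_map]
      rfl
    rw [h2]
    congr 1
    have h3 : Finset.univ.map e.toEmbedding = Finset.univ := Finset.map_univ_equiv e
    calc Finset.univ.val.map ⇑e = (Finset.univ.map e.toEmbedding).val := by
          rw [Finset.map_val]; rfl
      _ = Finset.univ.val := by rw [h3]
  have hsortedL : (List.ofFn (fun i => d (e i))).Pairwise (· ≥ ·) := by
    rw [List.pairwise_iff_get]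
    intro i j hij
    rw [List.get_ofFn, List.get_ofFn]
    exact hmono _ _ (by
      show ((Fin.cast List.length_ofFn i)) ≤ ((Fin.cast List.length_ofFn j))
      exact le_of_lt (by simpa using hij))
  haveI : Std.Antisymm (· ≥ · : ℕ → ℕ → Prop) := ⟨fun a b h h' => le_antisymm h' h⟩
  have hLπ : List.ofFn (fun i => d (e i)) = π :=
    List.Perm.eq_of_pairwise' hsortedL hπ hperm
  refine ⟨SimpleGraph.comap (⇑e) G, e, ?_, fun a b => Iff.rfl⟩
  intro i
  rw [gdeg_comap]
  have h4 : π.get i = d (e i) := by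
    rw [List.get_of_eq hLπ.symm i, List.get_ofFn]
    congr 1
  rw [h4]


/-- **Yin.** A nonincreasing graphic sequence `π` (with at least `r+t` terms) is potentially
`(K_r ∨ K̄_t)`-graphic iff there is a realization of `π` (vertex `i` having degree
`d_{i+1}`) containing a copy of `K_r ∨ K̄_t` in which the clique of order `r` occupies the
vertices of degrees `d_1, …, d_r` and the independent set of order `t` occupies the
vertices of degrees `d_{r+1}, …, d_{r+t}`. -/
theorem yinCompleteSplit (r t : ℕ) (hr : 0 < r) (ht : 0 < t)
    (π : List ℕ) (hsorted : π.Pairwise (· ≥ ·)) (hgraphic : IsGraphic π)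
    (hrt : r + t ≤ π.length) :
    PotentiallyGraphic (graphJoin (⊤ : SimpleGraph (Fin r)) (⊥ : SimpleGraph (Fin t))) π ↔
      ∃ G : SimpleGraph (Fin π.length),
        (∀ i : Fin π.length, gdeg G i = π.get i) ∧
        ∀ a b : Fin π.length, a ≠ b → a.val < r → b.val < r + t → G.Adj a b := by
  constructor
  · rintro ⟨G, hdeg, f, hfinj, hfadj⟩
    -- convert the copy into an indexed family on Fin (r+t)
    set f₁ : Fin (r+t) → Fin π.length := fun j =>
      if h : j.val < r then f (Sum.inl ⟨j.val, h⟩)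
      else f (Sum.inr ⟨j.val - r, by omega⟩) with hf₁
    have hf₁val : ∀ (j : Fin (r+t)) (h : j.val < r), f₁ j = f (Sum.inl ⟨j.val, h⟩) := by
      intro j h; simp [hf₁, h]
    have hf₁val' : ∀ (j : Fin (r+t)) (h : ¬ j.val < r),
        f₁ j = f (Sum.inr ⟨j.val - r, by omega⟩) := by
      intro j h; simp [hf₁, h]
    have hinj1 : Function.Injective f₁ := by
      intro a b hab
      by_cases ha : a.val < r <;> by_cases hb : b.val < r
      · rw [hf₁val a ha, hf₁val b hb] at hab
        have := hfinj hab
        apply Fin.ext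
        simpa [Fin.ext_iff] using this
      · rw [hf₁val a ha, hf₁val' b hb] at hab
        exact absurd (hfinj hab) (by simp)
      · rw [hf₁val' a ha, hf₁val b hb] at hab
        exact absurd (hfinj hab) (by simp)
      · rw [hf₁val' a ha, hf₁val' b hb] at hab
        have := hfinj hab
        apply Fin.ext
        have h2 : a.val - r = b.val - r := by simpa [Fin.ext_iff] using this
        omega
    have hP1 : ∀ i j : Fin (r+t), i ≠ j → i.val < r → G.Adj (f₁ i) (f₁ j) := by
      intro i j hij hir
      rw [hf₁val i hir]
      by_cases hjr : j.val < r
      · rw [hf₁val j hjr]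
        refine hfadj ?_
        show (⊤ : SimpleGraph (Fin r)).Adj ⟨i.val, hir⟩ ⟨j.val, hjr⟩
        simp only [SimpleGraph.top_adj]
        intro hc
        exact hij (Fin.ext (by simpa [Fin.ext_iff] using hc))
      · rw [hf₁val' j hjr]
        exact hfadj trivial
    -- relabel so that degrees are positionally sorted
    obtain ⟨G₁, e, hG₁deg, hG₁adj⟩ := relabel π hsorted G hdeg
    set f₂ : Fin (r+t) → Fin π.length := fun j => e.symm (f₁ j) with hf₂
    have hinj2 : Function.Injective f₂ := by
      intro a b hab
      apply hinj1
      have h := congrArg e hab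
      simpa only [hf₂, Equiv.apply_symm_apply] using h
    have hP2 : ∀ i j : Fin (r+t), i ≠ j → i.val < r → G₁.Adj (f₂ i) (f₂ j) := by
      intro i j hij hir
      rw [hG₁adj]
      simp only [hf₂, Equiv.apply_symm_apply]
      exact hP1 i j hij hir
    -- sort the copy onto the first r+t positions
    obtain ⟨G', hG'deg, hG'P⟩ := sortCopy r t π hsorted hrt (r+t) G₁ f₂ hG₁deg hinj2 hP2
      (fun j hj => absurd hj (by omega))
    refine ⟨G', hG'deg, ?_⟩
    intro a b hab har hbrt
    have h1 : a.val < r + t := by omega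
    have h2 := hG'P ⟨a.val, h1⟩ ⟨b.val, hbrt⟩
      (fun hc => hab (Fin.ext (by simpa [Fin.ext_iff] using hc))) har
    have ha : Fin.castLE hrt (⟨a.val, h1⟩ : Fin (r+t)) = a := Fin.ext rfl
    have hb : Fin.castLE hrt (⟨b.val, hbrt⟩ : Fin (r+t)) = b := Fin.ext rfl
    rwa [ha, hb] at h2
  · rintro ⟨G, hdeg, hadj⟩
    refine ⟨G, ?_, ?_⟩
    · rw [degMultiset, Fin.univ_val_map]
      have : (fun i : Fin π.length => gdeg G i) = π.get := funext hdeg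
      rw [show (List.ofFn fun i => gdeg G i) = List.ofFn π.get from by rw [this],
        List.ofFn_get]
    · refine ⟨Sum.elim (fun a : Fin r => (⟨a.val, by omega⟩ : Fin π.length))
        (fun b : Fin t => (⟨r + b.val, by omega⟩ : Fin π.length)), ?_, ?_⟩
      · rintro (a | a) (b | b) hab <;> simp only [Sum.elim_inl, Sum.elim_inr] at hab
        · have : a.val = b.val := by simpa [Fin.ext_iff] using hab
          exact congrArg Sum.inl (Fin.ext this)
        · exfalso
          have : a.val = r + b.val := by simpa [Fin.ext_iff] using hab
          omega
        · exfalso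
          have : r + a.val = b.val := by simpa [Fin.ext_iff] using hab
          omega
        · have : a.val = b.val := by simpa [Fin.ext_iff] using hab
          exact congrArg Sum.inr (Fin.ext this)
      · rintro (a | a) (b | b) hab <;> simp only [Sum.elim_inl, Sum.elim_inr]
        · have hne : a ≠ b := fun hc =>
            (graphJoin (⊤ : SimpleGraph (Fin r)) (⊥ : SimpleGraph (Fin t))).loopless.irrefl
              _ (hc ▸ hab)
          exact hadj _ _ (fun hc => hne (Fin.ext (by simpa [Fin.ext_iff] using hc)))
            a.isLt (lt_of_lt_of_le b.isLt (Nat.le_add_right r t))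
        · exact hadj _ _ (by have := a.isLt; simp only [ne_eq, Fin.mk.injEq]; omega)
            a.isLt (Nat.add_lt_add_left b.isLt r)
        · exact (hadj _ _ (by have := b.isLt; simp only [ne_eq, Fin.mk.injEq]; omega)
            b.isLt (Nat.add_lt_add_left a.isLt r)).symm
        · exact absurd hab (by simp [graphJoin])
end
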